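/- arXiv:2208.14299 — 5 statements merged into one kernel-verified Lean document; each statement's English description precedes it below -/
import Mathlib

section
/- Let x ∈ Ω₀ be a point at which φ₀ is (Fréchet) differentiable. Then the section M_{0→1}[x] contains exactly one point, denoted T(x); it satisfies |x − T(x)| < R and ∇φ₀(x) = ∇𝕃(T(x) − x), equivalently T(x) = x + (∇𝕃)^{−1}(∇φ₀(x)). If moreover φ₀ admits a second-order Alexandrov expansion at x with symmetric Hessian matrix D²φ₀(x) (i.e. φ₀(y) = φ₀(x) + ⟨∇φ₀(x), y−x⟩ + ½⟨D²φ₀(x)(y−x), y−x⟩ + o(|y−x|²)), then D²φ₀(x) ≥ −D²𝕃(T(x) − x) in the sense of symmetric matrices, and the matrix DT(x) := I + (D²𝕃(T(x) − x))^{−1} D²φ₀(x) is diagonalizable over ℝ with nonnegative eigenvalues. -/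
noncomputable section

open scoped Classical RealInnerProductSpace

/-- The backward `𝕃`-transform `φ₁^{←𝕃}(x) = sup_{y ∈ B_R(x)} (φ₁(y) − 𝕃(y−x))`. -/
def bwTransform {d : ℕ} (R : ℝ) (Lfun φ₁ : EuclideanSpace ℝ (Fin d) → EReal)
    (x : EuclideanSpace ℝ (Fin d)) : EReal :=
  ⨆ y ∈ Metric.ball x R, φ₁ y - Lfun (y - x)

/-- `Ext_R(S)`: the union of all open balls of radius `R` whose center has
distance `> R` from `S`. -/
def extR {d : ℕ} (R : ℝ) (S : Set (EuclideanSpace ℝ (Fin d))) :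
    Set (EuclideanSpace ℝ (Fin d)) :=
  ⋃ (x) (_ : ENNReal.ofReal R < EMetric.infEdist x S), Metric.ball x R

/-- The section `M_{0→1}[x]` of the finite contact set of the `𝕃`-transform pair. -/
def MsecBT {d : ℕ} (Lfun φ₀ φ₁ : EuclideanSpace ℝ (Fin d) → EReal)
    (x : EuclideanSpace ℝ (Fin d)) : Set (EuclideanSpace ℝ (Fin d)) :=
  {y | φ₀ x ≠ ⊥ ∧ φ₀ x ≠ ⊤ ∧ φ₁ y ≠ ⊥ ∧ φ₁ y ≠ ⊤ ∧ φ₁ y = Lfun (y - x) + φ₀ x}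

open Metric Set Filter


open Metric Set Filter

lemma ereal_le_sub_real_iff (a : EReal) (β ℓ : ℝ) :
    (β : EReal) ≤ a - (ℓ : ℝ) ↔ ((β + ℓ : ℝ) : EReal) ≤ a := by
  induction a using EReal.rec with
  | bot => simp [EReal.bot_sub]
  | coe r =>
      rw [show ((r : ℝ) : EReal) - (ℓ : ℝ) = ((r - ℓ : ℝ) : EReal) by norm_cast]
      rw [EReal.coe_le_coe_iff, EReal.coe_le_coe_iff]; constructor <;> intro h <;> linarith
  | top => simp [EReal.top_sub_coe]

lemma ereal_lt_sub_real_iff (a : EReal) (β ℓ : ℝ) :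
    (β : EReal) < a - (ℓ : ℝ) ↔ ((β + ℓ : ℝ) : EReal) < a := by
  induction a using EReal.rec with
  | bot => simp [EReal.bot_sub]
  | coe r =>
      rw [show ((r : ℝ) : EReal) - (ℓ : ℝ) = ((r - ℓ : ℝ) : EReal) by norm_cast]
      rw [EReal.coe_lt_coe_iff, EReal.coe_lt_coe_iff]; constructor <;> intro h <;> linarith
  | top =>
      simp only [EReal.top_sub_coe]
      exact iff_of_true (EReal.coe_lt_top _) (EReal.coe_lt_top _)

lemma ereal_sub_real_le_iff (a : EReal) (c ℓ : ℝ) :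
    a - (ℓ : ℝ) ≤ (c : ℝ) ↔ a ≤ ((c + ℓ : ℝ) : EReal) := by
  induction a using EReal.rec with
  | bot => simp [EReal.bot_sub]
  | coe r =>
      rw [show ((r : ℝ) : EReal) - (ℓ : ℝ) = ((r - ℓ : ℝ) : EReal) by norm_cast]
      rw [EReal.coe_le_coe_iff, EReal.coe_le_coe_iff]; constructor <;> intro h <;> linarith
  | top =>
      simp only [EReal.top_sub_coe, top_le_iff]
      constructor
      · intro h; exact absurd h (EReal.coe_ne_top _)
      · intro h; exact absurd h (EReal.coe_ne_top _)

lemma isClosed_le_usc {X : Type*} [TopologicalSpace X] {φ : X → EReal}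
    (hφ : UpperSemicontinuous φ) {g : X → EReal} (hg : Continuous g) :
    IsClosed {y | g y ≤ φ y} := by
  rw [← isOpen_compl_iff, isOpen_iff_mem_nhds]
  intro y₀ hy₀
  simp only [mem_compl_iff, mem_setOf_eq, not_le] at hy₀
  obtain ⟨r, hr1, hr2⟩ := EReal.exists_between_coe_real hy₀
  have h1 : ∀ᶠ y in nhds y₀, φ y < (r : EReal) := hφ y₀ (r : EReal) hr1
  have h2 : ∀ᶠ y in nhds y₀, (r : EReal) < g y :=
    hg.continuousAt.eventually_mem (isOpen_Ioi.mem_nhds hr2)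
  filter_upwards [h1, h2] with y hy1 hy2
  simp only [mem_compl_iff, mem_setOf_eq, not_le]
  exact hy1.trans hy2

/-- Second-order Taylor bound via two applications of the mean value inequality. -/
lemma taylor2_bound (ψ ψ' ψ'' : ℝ → ℝ) (c ε t : ℝ) (ht : 0 < t) (hε : 0 ≤ ε)
    (hd1 : ∀ s ∈ Set.Icc (0:ℝ) t, HasDerivAt ψ (ψ' s) s)
    (hd2 : ∀ s ∈ Set.Icc (0:ℝ) t, HasDerivAt ψ' (ψ'' s) s)
    (hc : ∀ s ∈ Set.Icc (0:ℝ) t, |ψ'' s - c| ≤ ε) :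
    |ψ t - ψ 0 - t * ψ' 0 - t ^ 2 / 2 * c| ≤ ε * t ^ 2 := by
  have hconv : Convex ℝ (Set.Icc (0:ℝ) t) := convex_Icc 0 t
  have h0 : (0:ℝ) ∈ Set.Icc (0:ℝ) t := ⟨le_refl _, ht.le⟩
  have step1 : ∀ s ∈ Set.Icc (0:ℝ) t, |ψ' s - ψ' 0 - s * c| ≤ ε * s := by
    intro s hs
    have h := hconv.norm_image_sub_le_of_norm_hasDerivWithin_le
      (f := fun u => ψ' u - u * c) (f' := fun u => ψ'' u - c) (C := ε)
      (fun u hu => by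
        have := ((hd2 u hu).sub ((hasDerivAt_id u).mul_const c)).hasDerivWithinAt
          (s := Set.Icc (0:ℝ) t)
        simpa [Pi.sub_def] using this)
      (fun u hu => by simpa [Real.norm_eq_abs] using hc u hu) h0 hs
    calc |ψ' s - ψ' 0 - s * c|
        = ‖(ψ' s - s * c) - (ψ' 0 - 0 * c)‖ := by rw [Real.norm_eq_abs]; congr 1; ring
      _ ≤ ε * ‖s - 0‖ := h
      _ = ε * s := by rw [Real.norm_eq_abs, sub_zero, abs_of_nonneg hs.1]
  have step2 := hconv.norm_image_sub_le_of_norm_hasDerivWithin_le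
      (f := fun u => ψ u - u * ψ' 0 - u ^ 2 / 2 * c) (f' := fun u => ψ' u - ψ' 0 - u * c)
      (C := ε * t)
      (fun u hu => by
        have h1 : HasDerivAt (fun u : ℝ => u ^ 2 / 2 * c) (u * c) u := by
          have := ((hasDerivAt_pow 2 u).div_const 2).mul_const c
          simpa using this
        have := (((hd1 u hu).sub ((hasDerivAt_id u).mul_const (ψ' 0))).sub h1).hasDerivWithinAt
          (s := Set.Icc (0:ℝ) t)
        simpa [Pi.sub_def] using this)
      (fun u hu => by
        have h2 : ε * u ≤ ε * t := by nlinarith [hu.1, hu.2]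
        simpa [Real.norm_eq_abs] using (step1 u hu).trans h2)
      h0 ⟨ht.le, le_refl t⟩
  calc |ψ t - ψ 0 - t * ψ' 0 - t ^ 2 / 2 * c|
      = ‖(ψ t - t * ψ' 0 - t ^ 2 / 2 * c) - (ψ 0 - 0 * ψ' 0 - 0 ^ 2 / 2 * c)‖ := by
        rw [Real.norm_eq_abs]; congr 1; ring
    _ ≤ ε * t * ‖t - 0‖ := step2
    _ = ε * t ^ 2 := by rw [Real.norm_eq_abs, sub_zero, abs_of_nonneg ht.le]; ring


open Metric Set Filter

lemma diag_lemma {d : ℕ} (A HL HLinv : EuclideanSpace ℝ (Fin d) →L[ℝ] EuclideanSpace ℝ (Fin d))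
    (hAs : ∀ u v : EuclideanSpace ℝ (Fin d), ⟪A u, v⟫ = ⟪u, A v⟫)
    (hHs : ∀ u v : EuclideanSpace ℝ (Fin d), ⟪HL u, v⟫ = ⟪u, HL v⟫)
    (hHpos : ∀ v : EuclideanSpace ℝ (Fin d), v ≠ 0 → 0 < ⟪HL v, v⟫)
    (hinv1 : HLinv.comp HL = ContinuousLinearMap.id ℝ (EuclideanSpace ℝ (Fin d)))
    (hinv2 : HL.comp HLinv = ContinuousLinearMap.id ℝ (EuclideanSpace ℝ (Fin d)))
    (hnn : ∀ v : EuclideanSpace ℝ (Fin d), 0 ≤ ⟪A v, v⟫ + ⟪HL v, v⟫) :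
    ∃ (b : Module.Basis (Fin d) ℝ (EuclideanSpace ℝ (Fin d))) (μ : Fin d → ℝ),
      (∀ i, 0 ≤ μ i) ∧
      ∀ i, (ContinuousLinearMap.id ℝ (EuclideanSpace ℝ (Fin d)) +
          HLinv.comp A) (b i) = μ i • b i := by
  set E' := EuclideanSpace ℝ (Fin d)
  have hT : (↑HL : E' →ₗ[ℝ] E').IsSymmetric := fun u v => hHs u v
  have hfin : Module.finrank ℝ E' = d := finrank_euclideanSpace_fin
  set e : OrthonormalBasis (Fin d) ℝ E' := hT.eigenvectorBasis hfin with he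
  set lam : Fin d → ℝ := hT.eigenvalues hfin with hlam
  have heig : ∀ i, HL (e i) = lam i • e i := fun i => hT.apply_eigenvectorBasis hfin i
  have hite : ∀ i j, ⟪e i, e j⟫ = if i = j then (1:ℝ) else 0 :=
    orthonormal_iff_ite.mp e.orthonormal
  have hlampos : ∀ i, 0 < lam i := by
    intro i
    have h := hHpos (e i) (by simpa using e.toBasis.ne_zero i)
    rw [heig i, real_inner_smul_left, hite i i] at h
    simpa using h
  -- diagonal operators
  set Dg : (Fin d → ℝ) → E' →L[ℝ] E' :=
    fun c => ∑ i, c i • (innerSL ℝ (e i)).smulRight (e i) with hDg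
  have hDapply : ∀ c (u : E'), Dg c u = ∑ i, (c i * ⟪e i, u⟫) • e i := by
    intro c u
    simp [hDg, ContinuousLinearMap.sum_apply, ContinuousLinearMap.smulRight_apply, smul_smul]
  have hinner : ∀ c (u : E') j, ⟪e j, Dg c u⟫ = c j * ⟪e j, u⟫ := by
    intro c u j
    rw [hDapply, inner_sum]
    have : ∀ i, ⟪e j, (c i * ⟪e i, u⟫) • e i⟫ = (if j = i then c i * ⟪e i, u⟫ else 0) := by
      intro i
      rw [real_inner_smul_right, hite j i]
      by_cases h : j = i <;> simp [h]
    rw [Finset.sum_congr rfl fun i _ => this i]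
    simp
  have hDD : ∀ c c' (u : E'), Dg c (Dg c' u) = Dg (fun i => c i * c' i) u := by
    intro c c' u
    rw [hDapply c (Dg c' u), hDapply (fun i => c i * c' i) u]
    exact Finset.sum_congr rfl fun i _ => by rw [hinner, mul_assoc]
  have hDsymm : ∀ c (u w : E'), ⟪Dg c u, w⟫ = ⟪u, Dg c w⟫ := by
    intro c u w
    rw [hDapply, hDapply, sum_inner, inner_sum]
    refine Finset.sum_congr rfl fun i _ => ?_
    rw [real_inner_smul_left, real_inner_smul_right, real_inner_comm u (e i)]
    ring
  have hDid : ∀ u : E', Dg (fun _ => 1) u = u := by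
    intro u
    rw [hDapply]
    simpa using e.sum_repr' u
  have hHLD : ∀ u : E', HL u = Dg lam u := by
    intro u
    conv_lhs => rw [← e.sum_repr' u]
    rw [map_sum, hDapply]
    refine Finset.sum_congr rfl fun i _ => ?_
    rw [map_smul, heig i, smul_smul, mul_comm]
  set sq : Fin d → ℝ := fun i => Real.sqrt (lam i) with hsq
  have hsqpos : ∀ i, 0 < sq i := fun i => Real.sqrt_pos.mpr (hlampos i)
  have hsqsq : ∀ i, sq i * sq i = lam i := fun i => Real.mul_self_sqrt (hlampos i).le
  set S : E' →L[ℝ] E' := Dg sq with hS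
  set Sinv : E' →L[ℝ] E' := Dg (fun i => (sq i)⁻¹) with hSinv
  have hSinvS : ∀ u : E', Sinv (S u) = u := by
    intro u
    rw [hS, hSinv, hDD]
    have : (fun i => (sq i)⁻¹ * sq i) = fun _ : Fin d => (1:ℝ) :=
      funext fun i => inv_mul_cancel₀ (hsqpos i).ne'
    rw [this, hDid]
  have hSSinv : ∀ u : E', S (Sinv u) = u := by
    intro u
    rw [hS, hSinv, hDD]
    have : (fun i => sq i * (sq i)⁻¹) = fun _ : Fin d => (1:ℝ) :=
      funext fun i => mul_inv_cancel₀ (hsqpos i).ne'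
    rw [this, hDid]
  have hHLSS : ∀ u : E', HL (Sinv (Sinv u)) = u := by
    intro u
    rw [hSinv, hDD, hHLD, hDD]
    have : (fun i => lam i * ((sq i)⁻¹ * (sq i)⁻¹)) = fun _ : Fin d => (1:ℝ) := by
      funext i
      rw [← mul_inv, hsqsq, mul_inv_cancel₀ (hlampos i).ne']
    rw [this, hDid]
  have hHLinv_eq : ∀ u : E', HLinv u = Sinv (Sinv u) := by
    intro u
    conv_lhs => rw [← hHLSS u]
    have := ContinuousLinearMap.ext_iff.mp hinv1 (Sinv (Sinv u))
    simpa using this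
  set Clm : E' →L[ℝ] E' := Sinv.comp ((HL + A).comp Sinv) with hClm
  have hClm_apply : ∀ u : E', Clm u = Sinv (HL (Sinv u) + A (Sinv u)) := by
    intro u; simp [hClm]
  have hCs : (↑Clm : E' →ₗ[ℝ] E').IsSymmetric := by
    intro u v
    show ⟪Clm u, v⟫ = ⟪u, Clm v⟫
    rw [hClm_apply, hClm_apply, hSinv, hDsymm, ← hSinv]
    rw [inner_add_left, hHs, hAs, ← inner_add_right]
    rw [hSinv, ← hDsymm, ← hSinv]
  set ff : OrthonormalBasis (Fin d) ℝ E' := hCs.eigenvectorBasis hfin with hff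
  set μ : Fin d → ℝ := hCs.eigenvalues hfin with hμ
  have hCf : ∀ i, Clm (ff i) = μ i • ff i := fun i => hCs.apply_eigenvectorBasis hfin i
  have hfite : ∀ i j, ⟪ff i, ff j⟫ = if i = j then (1:ℝ) else 0 :=
    orthonormal_iff_ite.mp ff.orthonormal
  have hμnn : ∀ i, 0 ≤ μ i := by
    intro i
    have h1 : ⟪Clm (ff i), ff i⟫ = μ i := by
      rw [hCf, real_inner_smul_left, hfite i i]; simp
    have h2 : ⟪Clm (ff i), ff i⟫ = ⟪HL (Sinv (ff i)) + A (Sinv (ff i)), Sinv (ff i)⟫ := by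
      rw [hClm_apply, hSinv, hDsymm, ← hSinv]
    rw [← h1, h2, inner_add_left]
    have := hnn (Sinv (ff i))
    linarith [this]
  set Sequiv : E' ≃ₗ[ℝ] E' :=
    LinearEquiv.ofLinear (↑Sinv) (↑S)
      (LinearMap.ext fun u => hSinvS u) (LinearMap.ext fun u => hSSinv u) with hSeq
  set b : Module.Basis (Fin d) ℝ E' := ff.toBasis.map Sequiv with hb
  have hbi : ∀ i, b i = Sinv (ff i) := by
    intro i
    simp [hb, Module.Basis.map_apply, OrthonormalBasis.coe_toBasis, hSeq, LinearEquiv.ofLinear_apply]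
  refine ⟨b, μ, hμnn, fun i => ?_⟩
  have key : Sinv (Clm (ff i)) = b i + HLinv (A (b i)) := by
    rw [hClm_apply, ← hHLinv_eq, map_add, ← hbi]
    congr 1
    have := ContinuousLinearMap.ext_iff.mp hinv1 (b i)
    simpa using this
  have key2 : Sinv (Clm (ff i)) = μ i • b i := by
    rw [hCf, map_smul, hbi]
  rw [ContinuousLinearMap.add_apply, ContinuousLinearMap.coe_id', id_eq,
    ContinuousLinearMap.comp_apply, ← key, key2]

set_option maxHeartbeats 2000000 in
theorem statement_14 (d : ℕ) (hd : 1 ≤ d) (R : ℝ) (hR : 0 < R)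
    (Lfun : EuclideanSpace ℝ (Fin d) → EReal)
    (hLcont : Continuous Lfun)
    (hLnonneg : ∀ z, 0 ≤ Lfun z)
    (hL0 : Lfun 0 = 0)
    (hLfin : ∀ z, Lfun z < ⊤ ↔ ‖z‖ < R)
    (L : EuclideanSpace ℝ (Fin d) → ℝ)
    (hLL : ∀ z ∈ Metric.ball (0 : EuclideanSpace ℝ (Fin d)) R, Lfun z = ((L z : ℝ) : EReal))
    (hLC2 : ContDiffOn ℝ 2 L (Metric.ball 0 R))
    (lamStar : ℝ) (hlam : 0 < lamStar)
    (hLconv : ∀ z ∈ Metric.ball (0 : EuclideanSpace ℝ (Fin d)) R,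
      ∀ v : EuclideanSpace ℝ (Fin d),
        lamStar * ‖v‖ ^ 2 ≤ fderiv ℝ (fderiv ℝ L) z v v)
    (φ₁ : EuclideanSpace ℝ (Fin d) → EReal)
    (hφ₁ : UpperSemicontinuous φ₁)
    (φ₀ : EuclideanSpace ℝ (Fin d) → EReal)
    (hφ₀ : φ₀ = bwTransform R Lfun φ₁)
    (x : EuclideanSpace ℝ (Fin d))
    (hx : x ∈ {x | ⊥ < φ₀ x} ∩ interior {x | φ₀ x < ⊤})
    (f : EuclideanSpace ℝ (Fin d) → ℝ) (ρ : ℝ) (hρ : 0 < ρ)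
    (hrep : ∀ y ∈ Metric.ball x ρ, φ₀ y = ((f y : ℝ) : EReal))
    (p : EuclideanSpace ℝ (Fin d)) (hp : HasGradientAt f p x) :
    ∃ Tx : EuclideanSpace ℝ (Fin d),
      MsecBT Lfun φ₀ φ₁ x = {Tx} ∧
      ‖x - Tx‖ < R ∧
      HasGradientAt L p (Tx - x) ∧
      ∀ A : EuclideanSpace ℝ (Fin d) →L[ℝ] EuclideanSpace ℝ (Fin d),
        (∀ u v : EuclideanSpace ℝ (Fin d), ⟪A u, v⟫ = ⟪u, A v⟫) →
        (∀ ε > (0 : ℝ), ∃ δ > (0 : ℝ), ∀ y : EuclideanSpace ℝ (Fin d), ‖y - x‖ < δ →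
          |f y - f x - ⟪p, y - x⟫ - 1 / 2 * ⟪A (y - x), y - x⟫| ≤ ε * ‖y - x‖ ^ 2) →
        (∀ v : EuclideanSpace ℝ (Fin d),
          0 ≤ ⟪A v, v⟫ + fderiv ℝ (fderiv ℝ L) (Tx - x) v v) ∧
        ∀ HL HLinv : EuclideanSpace ℝ (Fin d) →L[ℝ] EuclideanSpace ℝ (Fin d),
          (∀ v w : EuclideanSpace ℝ (Fin d),
            ⟪HL v, w⟫ = fderiv ℝ (fderiv ℝ L) (Tx - x) v w) →
          HLinv.comp HL = ContinuousLinearMap.id ℝ (EuclideanSpace ℝ (Fin d)) →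
          HL.comp HLinv = ContinuousLinearMap.id ℝ (EuclideanSpace ℝ (Fin d)) →
          ∃ (b : Module.Basis (Fin d) ℝ (EuclideanSpace ℝ (Fin d))) (μ : Fin d → ℝ),
            (∀ i, 0 ≤ μ i) ∧
            ∀ i, (ContinuousLinearMap.id ℝ (EuclideanSpace ℝ (Fin d)) +
                HLinv.comp A) (b i) = μ i • b i := by
  obtain ⟨hxbot, hxint⟩ := hx
  have hball : IsOpen (Metric.ball (0 : EuclideanSpace ℝ (Fin d)) R) := Metric.isOpen_ball
  -- differentiability facts about L
  have hLdiff : ∀ z ∈ Metric.ball (0 : EuclideanSpace ℝ (Fin d)) R,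
      HasFDerivAt L (fderiv ℝ L z) z := by
    intro z hz
    exact (hLC2.differentiableOn (by norm_num)).differentiableAt
      (hball.mem_nhds hz) |>.hasFDerivAt
  have hC1 : ContDiffOn ℝ 1 (fderiv ℝ L) (Metric.ball 0 R) :=
    hLC2.fderiv_of_isOpen hball (by norm_num)
  have hB2diff : ∀ z ∈ Metric.ball (0 : EuclideanSpace ℝ (Fin d)) R,
      HasFDerivAt (fderiv ℝ L) (fderiv ℝ (fderiv ℝ L) z) z := by
    intro z hz
    exact (hC1.differentiableOn (by norm_num)).differentiableAt
      (hball.mem_nhds hz) |>.hasFDerivAt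
  have hB2cont : ContinuousOn (fderiv ℝ (fderiv ℝ L)) (Metric.ball 0 R) :=
    hC1.continuousOn_fderiv_of_isOpen hball (by norm_num)
  have hfx : φ₀ x = ((f x : ℝ) : EReal) := hrep x (Metric.mem_ball_self hρ)
  have hsup : ∀ x', φ₀ x' = ⨆ y ∈ Metric.ball x' R, φ₁ y - Lfun (y - x') := by
    intro x'; rw [hφ₀]; rfl
  have hterm : ∀ x' y, y ∈ Metric.ball x' R → φ₁ y - Lfun (y - x') ≤ φ₀ x' := by
    intro x' y hy
    rw [hsup x']
    exact le_iSup₂ (f := fun y _ => φ₁ y - Lfun (y - x')) y hy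
  -- every contact point lies in the open ball and satisfies the gradient equation
  have hmax : ∀ y ∈ MsecBT Lfun φ₀ φ₁ x, ‖y - x‖ < R ∧
      HasFDerivAt L ((InnerProductSpace.toDual ℝ (EuclideanSpace ℝ (Fin d))) p) (y - x) ∧
      ∀ x' ∈ Metric.ball x (min ρ (R - ‖y - x‖)),
        f x + L (y - x) ≤ f x' + L (y - x') := by
    rintro y ⟨h0b, h0t, h1b, h1t, heq⟩
    have hLnetop : Lfun (y - x) ≠ ⊤ := by
      intro htop
      rw [htop, EReal.top_add_of_ne_bot h0b] at heq
      exact h1t heq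
    have hyR : ‖y - x‖ < R := (hLfin _).mp (lt_top_iff_ne_top.mpr hLnetop)
    have hy0R : y - x ∈ Metric.ball (0 : EuclideanSpace ℝ (Fin d)) R := mem_ball_zero_iff.mpr hyR
    have hL1 : Lfun (y - x) = ((L (y - x) : ℝ) : EReal) := hLL _ hy0R
    have heq' : φ₁ y = ((L (y - x) + f x : ℝ) : EReal) := by
      rw [heq, hL1, hfx]; norm_cast
    have hr1 : 0 < min ρ (R - ‖y - x‖) := lt_min hρ (by linarith)
    have hloc : ∀ x' ∈ Metric.ball x (min ρ (R - ‖y - x‖)),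
        f x + L (y - x) ≤ f x' + L (y - x') := by
      intro x' hx'
      have hx'ρ : x' ∈ Metric.ball x ρ := by
        rw [mem_ball] at hx' ⊢; exact hx'.trans_le (min_le_left _ _)
      have hxx' : ‖x - x'‖ < R - ‖y - x‖ := by
        have h1 : dist x' x < R - ‖y - x‖ := (mem_ball.mp hx').trans_le (min_le_right _ _)
        rw [dist_eq_norm] at h1
        rwa [norm_sub_rev]
      have hyx'R : ‖y - x'‖ < R := by
        calc ‖y - x'‖ = ‖(y - x) + (x - x')‖ := by congr 1; abel
          _ ≤ ‖y - x‖ + ‖x - x'‖ := norm_add_le _ _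
          _ < R := by linarith
      have hyx'ball : y ∈ Metric.ball x' R := by
        rw [mem_ball, dist_eq_norm]; exact hyx'R
      have h := hterm x' y hyx'ball
      rw [hrep x' hx'ρ, hLL (y - x') (mem_ball_zero_iff.mpr hyx'R), heq',
        ereal_sub_real_le_iff] at h
      have := EReal.coe_le_coe_iff.mp h
      linarith
    refine ⟨hyR, ?_, hloc⟩
    have hmin : IsLocalMin (fun x' => f x' + L (y - x')) x :=
      Filter.eventually_of_mem (Metric.ball_mem_nhds x hr1) (fun x' hx' => hloc x' hx')
    have hLd : HasFDerivAt L (fderiv ℝ L (y - x)) (y - x) := hLdiff _ hy0R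
    have haff : HasFDerivAt (fun x' : EuclideanSpace ℝ (Fin d) => y - x')
        (-(ContinuousLinearMap.id ℝ (EuclideanSpace ℝ (Fin d)))) x := by
      simpa [Pi.sub_def] using (hasFDerivAt_const (𝕜 := ℝ) y x).sub (hasFDerivAt_id (𝕜 := ℝ) x)
    have hcomp : HasFDerivAt (fun x' => L (y - x'))
        ((fderiv ℝ L (y - x)).comp (-(ContinuousLinearMap.id ℝ (EuclideanSpace ℝ (Fin d))))) x :=
      hLd.comp x haff
    have hg := (hp.hasFDerivAt).add hcomp
    have h0 := hmin.hasFDerivAt_eq_zero hg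
    have hfd : fderiv ℝ L (y - x) = (InnerProductSpace.toDual ℝ (EuclideanSpace ℝ (Fin d))) p := by
      ext v
      have hv := ContinuousLinearMap.ext_iff.mp h0 v
      simp only [ContinuousLinearMap.add_apply, ContinuousLinearMap.comp_apply,
        ContinuousLinearMap.neg_apply, ContinuousLinearMap.coe_id', id_eq, map_neg,
        ContinuousLinearMap.zero_apply] at hv
      linarith
    rw [← hfd]; exact hLd
  -- existence of a contact point
  have hexist : ∃ y, y ∈ MsecBT Lfun φ₀ φ₁ x := by
    have hfc : ContinuousAt f x := hp.hasFDerivAt.continuousAt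
    obtain ⟨δf, hδfpos, hδf⟩ := Metric.continuousAt_iff.mp hfc 1 one_pos
    set ε₀ := min (min δf ρ) R / 2 with hε₀
    have hε₀pos : 0 < ε₀ := by
      apply div_pos _ two_pos
      exact lt_min (lt_min hδfpos hρ) hR
    have hε₀δf : ε₀ < δf := by
      have h := le_trans (min_le_left (min δf ρ) R) (min_le_left δf ρ)
      rw [hε₀]; linarith
    have hε₀ρ : ε₀ < ρ := by
      have h := le_trans (min_le_left (min δf ρ) R) (min_le_right δf ρ)
      rw [hε₀]; linarith
    have hε₀R : ε₀ ≤ R / 2 := by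
      have h := min_le_right (min δf ρ) R
      rw [hε₀]; linarith
    have hsub : Metric.closedBall (0 : EuclideanSpace ℝ (Fin d)) (R - ε₀) ⊆
        Metric.ball 0 R := Metric.closedBall_subset_ball (by linarith)
    obtain ⟨z₀, hz₀K, hz₀max⟩ :=
      (isCompact_closedBall (0 : EuclideanSpace ℝ (Fin d)) (R - ε₀)).exists_isMaxOn
        ⟨0, by simp only [Metric.mem_closedBall, dist_self]; linarith⟩
        (hLC2.continuousOn.mono hsub)
    set CL := L z₀ with hCL
    set C₂ := f x + 1 + CL with hC₂
    have hub : ∀ y : EuclideanSpace ℝ (Fin d), ε₀ ≤ ‖y - x‖ → ‖y - x‖ < R →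
        φ₁ y ≤ ((C₂ : ℝ) : EReal) := by
      intro y h1 h2
      have hynx : 0 < ‖y - x‖ := lt_of_lt_of_le hε₀pos h1
      set x' := x + (ε₀ * ‖y - x‖⁻¹) • (y - x) with hx'
      have hx'x : x' - x = (ε₀ * ‖y - x‖⁻¹) • (y - x) := by rw [hx']; abel
      have hnx'x : ‖x' - x‖ = ε₀ := by
        rw [hx'x, norm_smul, Real.norm_eq_abs, abs_of_nonneg (by positivity)]
        field_simp
      have hyx' : y - x' = (1 - ε₀ * ‖y - x‖⁻¹) • (y - x) := by
        rw [hx']; module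
      have hcoef : 0 ≤ 1 - ε₀ * ‖y - x‖⁻¹ := by
        have h3 : ε₀ * ‖y - x‖⁻¹ ≤ 1 := by
          rw [← div_eq_mul_inv]
          exact (div_le_one hynx).mpr h1
        linarith
      have hnyx' : ‖y - x'‖ = ‖y - x‖ - ε₀ := by
        rw [hyx', norm_smul, Real.norm_eq_abs, abs_of_nonneg hcoef]
        field_simp
      have hx'ρ : x' ∈ Metric.ball x ρ := by
        rw [mem_ball, dist_eq_norm, hnx'x]; exact hε₀ρ
      have hyball : y ∈ Metric.ball x' R := by
        rw [mem_ball, dist_eq_norm, hnyx']; linarith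
      have h := hterm x' y hyball
      rw [hrep x' hx'ρ, hLL (y - x') (mem_ball_zero_iff.mpr (by rw [hnyx']; linarith)),
        ereal_sub_real_le_iff] at h
      refine h.trans ?_
      rw [EReal.coe_le_coe_iff]
      have hf' : f x' < f x + 1 := by
        have hd := hδf (show dist x' x < δf by rw [dist_eq_norm, hnx'x]; exact hε₀δf)
        rw [Real.dist_eq] at hd
        have := (abs_lt.mp hd).2
        linarith
      have hL' : L (y - x') ≤ CL := hz₀max (show (y - x') ∈
          Metric.closedBall (0 : EuclideanSpace ℝ (Fin d)) (R - ε₀) by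
        rw [mem_closedBall_zero_iff, hnyx']; linarith)
      rw [hC₂]; linarith
    set M := C₂ - f x + 1 with hM
    have hann : ∃ r1, ε₀ ≤ r1 ∧ r1 < R ∧
        ∀ z : EuclideanSpace ℝ (Fin d), r1 < ‖z‖ → ‖z‖ < R →
          ((M : ℝ) : EReal) < Lfun z := by
      set K' := Metric.closedBall (0 : EuclideanSpace ℝ (Fin d)) R ∩
        {z | Lfun z ≤ ((M : ℝ) : EReal)} with hK'
      have hK'closed : IsClosed K' :=
        Metric.isClosed_closedBall.inter (isClosed_le hLcont continuous_const)
      have hK'cpt : IsCompact K' :=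
        (isCompact_closedBall _ _).of_isClosed_subset hK'closed Set.inter_subset_left
      by_cases hne : K'.Nonempty
      · obtain ⟨z₁, hz₁K, hz₁max⟩ := hK'cpt.exists_isMaxOn hne continuous_norm.continuousOn
        have hz₁R : ‖z₁‖ < R := by
          have hlt : Lfun z₁ < ⊤ := lt_of_le_of_lt hz₁K.2 (EReal.coe_lt_top M)
          exact (hLfin _).mp hlt
        refine ⟨max ‖z₁‖ ε₀, le_max_right _ _, max_lt hz₁R (by linarith), ?_⟩
        intro z hz1 hz2
        by_contra hle
        push_neg at hle
        have hzK : z ∈ K' := ⟨mem_closedBall_zero_iff.mpr hz2.le, hle⟩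
        have h5 : ‖z‖ ≤ ‖z₁‖ := hz₁max hzK
        have h6 := le_max_left ‖z₁‖ ε₀
        linarith
      · refine ⟨ε₀, le_refl _, by linarith, ?_⟩
        intro z hz1 hz2
        by_contra hle
        push_neg at hle
        exact hne ⟨z, mem_closedBall_zero_iff.mpr hz2.le, hle⟩
    obtain ⟨r1, hr1ε, hr1R, hr1⟩ := hann
    set r2 := (r1 + R) / 2 with hr2
    have hr2a : r1 < r2 := by rw [hr2]; linarith
    have hr2b : r2 < R := by rw [hr2]; linarith
    set K := Metric.closedBall x r2 with hK
    have hKball : K ⊆ Metric.ball x R := Metric.closedBall_subset_ball hr2b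
    have hsupK : (⨆ y ∈ K, (φ₁ y - Lfun (y - x))) = ((f x : ℝ) : EReal) := by
      apply le_antisymm
      · refine iSup₂_le fun y hy => ?_
        rw [← hfx]
        exact hterm x y (hKball hy)
      · by_contra hlt
        push_neg at hlt
        have hsplit : φ₀ x ≤ max (⨆ y ∈ K, (φ₁ y - Lfun (y - x)))
            (((f x - 1 : ℝ)) : EReal) := by
          rw [hsup x]
          refine iSup₂_le fun y hy => ?_
          by_cases hyK : y ∈ K
          · exact le_max_of_le_left (le_iSup₂ (f := fun y _ => φ₁ y - Lfun (y - x)) y hyK)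
          · have hy1 : r2 < ‖y - x‖ := by
              by_contra hc; push_neg at hc
              exact hyK (mem_closedBall.mpr (by rwa [dist_eq_norm]))
            have hy2 : ‖y - x‖ < R := by rwa [mem_ball, dist_eq_norm] at hy
            have hφb := hub y (le_trans (le_trans hr1ε hr2a.le) hy1.le) hy2
            have hMlt := hr1 (y - x) (lt_trans hr2a hy1) hy2
            apply le_max_of_le_right
            have hLnb : Lfun (y - x) ≠ ⊥ := by
              intro h
              have h0 := hLnonneg (y - x)
              rw [h, le_bot_iff] at h0
              exact absurd h0 (by simp)
            rcases eq_or_ne (Lfun (y - x)) ⊤ with htop | hntop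
            · rw [htop, EReal.sub_top]
              exact bot_le
            · set ℓ := (Lfun (y - x)).toReal with hℓ
              have hLeq : Lfun (y - x) = ((ℓ : ℝ) : EReal) := (EReal.coe_toReal hntop hLnb).symm
              rw [hLeq, ereal_sub_real_le_iff]
              refine hφb.trans ?_
              rw [EReal.coe_le_coe_iff]
              have hMℓ : (M : ℝ) < ℓ := by
                rw [hLeq] at hMlt
                exact_mod_cast hMlt
              rw [hM] at hMℓ
              linarith
        rw [hfx] at hsplit
        rcases le_max_iff.mp hsplit with h | h
        · exact absurd h (not_le.mpr hlt)
        · rw [EReal.coe_le_coe_iff] at h; linarith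
    set Z : ℕ → Set (EuclideanSpace ℝ (Fin d)) := fun n =>
      K ∩ {y | ((f x - 1 / (n + 1) : ℝ) : EReal) + Lfun (y - x) ≤ φ₁ y} with hZ
    have hEadd : ∀ c : ℝ, Continuous (fun a : EReal => ((c : ℝ) : EReal) + a) := by
      intro c
      rw [continuous_iff_continuousAt]
      intro a
      have h1 : ContinuousAt (fun p : EReal × EReal => p.1 + p.2) (((c : ℝ) : EReal), a) :=
        EReal.continuousAt_add (Or.inl (by simp)) (Or.inl (by simp))
      exact h1.comp (Continuous.continuousAt (continuous_const.prodMk continuous_id))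
    have hZclosed : ∀ n : ℕ, IsClosed (Z n) := by
      intro n
      have h1 : Continuous (fun y : EuclideanSpace ℝ (Fin d) =>
          ((f x - 1 / (n + 1) : ℝ) : EReal) + Lfun (y - x)) :=
        (hEadd _).comp (hLcont.comp (continuous_id.sub continuous_const))
      exact Metric.isClosed_closedBall.inter (isClosed_le_usc hφ₁ h1)
    have hZnon : ∀ n : ℕ, (Z n).Nonempty := by
      intro n
      have hpos : (0:ℝ) < 1 / (n + 1) := by positivity
      by_contra hemp
      rw [Set.not_nonempty_iff_eq_empty] at hemp
      have hb : (⨆ y ∈ K, (φ₁ y - Lfun (y - x))) ≤ ((f x - 1/(n+1) : ℝ) : EReal) := by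
        refine iSup₂_le fun y hy => ?_
        have hny : y ∉ Z n := by rw [hemp]; exact Set.notMem_empty y
        simp only [hZ, Set.mem_inter_iff, Set.mem_setOf_eq, not_and] at hny
        have hlt := not_le.mp (hny hy)
        have hyR : ‖y - x‖ < R := by
          have := hKball hy; rwa [mem_ball, dist_eq_norm] at this
        rw [hLL (y - x) (mem_ball_zero_iff.mpr hyR)] at hlt ⊢
        rw [ereal_sub_real_le_iff]
        rw [← EReal.coe_add] at hlt
        exact hlt.le
      rw [hsupK, EReal.coe_le_coe_iff] at hb
      linarith
    have hZdec : ∀ n : ℕ, Z (n + 1) ⊆ Z n := by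
      intro n y hy
      refine ⟨hy.1, ?_⟩
      have hy2 := hy.2
      simp only [Set.mem_setOf_eq] at hy2 ⊢
      refine le_trans (add_le_add_left ?_ _) hy2
      rw [EReal.coe_le_coe_iff]
      have h7 : (1:ℝ)/(n+1+1) ≤ 1/(n+1) := by
        apply one_div_le_one_div_of_le
        · positivity
        · push_cast; linarith
      push_cast
      push_cast at h7
      linarith
    obtain ⟨ystar, hystar⟩ :=
      IsCompact.nonempty_iInter_of_sequence_nonempty_isCompact_isClosed Z hZdec hZnon
        ((isCompact_closedBall x r2).of_isClosed_subset (hZclosed 0)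
          Set.inter_subset_left) hZclosed
    have hyK : ystar ∈ K := (Set.mem_iInter.mp hystar 0).1
    have hyR : ‖ystar - x‖ < R := by
      have := hKball hyK; rwa [mem_ball, dist_eq_norm] at this
    set ℓ := L (ystar - x) with hℓ
    have hLeq : Lfun (ystar - x) = ((ℓ : ℝ) : EReal) := hLL _ (mem_ball_zero_iff.mpr hyR)
    have hlow : ∀ n : ℕ, ((f x - 1/(n+1) + ℓ : ℝ) : EReal) ≤ φ₁ ystar := by
      intro n
      have h8 := (Set.mem_iInter.mp hystar n).2
      rw [Set.mem_setOf_eq, hLeq, ← EReal.coe_add] at h8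
      exact h8
    have hup : φ₁ ystar ≤ ((f x + ℓ : ℝ) : EReal) := by
      have h9 := hterm x ystar (hKball hyK)
      rw [hfx, hLeq, ereal_sub_real_le_iff] at h9
      exact h9
    have hnetop : φ₁ ystar ≠ ⊤ := ne_top_of_le_ne_top (EReal.coe_ne_top _) hup
    have hnebot : φ₁ ystar ≠ ⊥ := by
      intro hb
      have := hlow 0
      rw [hb, le_bot_iff] at this
      exact EReal.coe_ne_bot _ this
    set q := (φ₁ ystar).toReal with hq
    have hqeq : φ₁ ystar = ((q : ℝ) : EReal) := (EReal.coe_toReal hnetop hnebot).symm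
    have hq1 : q ≤ f x + ℓ := by
      rw [hqeq, EReal.coe_le_coe_iff] at hup; exact hup
    have hq2 : ∀ n : ℕ, f x - 1/(n+1) + ℓ ≤ q := fun n => by
      have := hlow n; rw [hqeq, EReal.coe_le_coe_iff] at this; exact this
    have hqeq2 : q = f x + ℓ := by
      refine le_antisymm hq1 ?_
      have htend : Filter.Tendsto (fun n : ℕ => f x - 1/(n+1) + ℓ) Filter.atTop
          (nhds (f x - 0 + ℓ)) :=
        Filter.Tendsto.add (Filter.Tendsto.sub tendsto_const_nhds
          tendsto_one_div_add_atTop_nhds_zero_nat) tendsto_const_nhds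
      have := le_of_tendsto' htend hq2
      simpa using this
    refine ⟨ystar, ?_, ?_, hnebot, hnetop, ?_⟩
    · rw [hfx]; exact EReal.coe_ne_bot _
    · rw [hfx]; exact EReal.coe_ne_top _
    · rw [hqeq, hLeq, hfx, ← EReal.coe_add]
      exact_mod_cast (by rw [hqeq2]; ring : q = ℓ + f x)
  -- uniqueness
  have huniq : ∀ y1 y2, y1 ∈ MsecBT Lfun φ₀ φ₁ x → y2 ∈ MsecBT Lfun φ₀ φ₁ x → y1 = y2 := by
    intro y1 y2 h1 h2
    obtain ⟨hR1, hg1, -⟩ := hmax y1 h1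
    obtain ⟨hR2, hg2, -⟩ := hmax y2 h2
    by_contra hne
    set u := (y1 - x) - (y2 - x) with hu
    have hune : u ≠ 0 := by
      rw [hu]
      intro h
      apply hne
      have h2 : y1 - x = y2 - x := sub_eq_zero.mp h
      exact sub_left_injective h2
    have hupos : 0 < ‖u‖ := norm_pos_iff.mpr hune
    set c : ℝ → EuclideanSpace ℝ (Fin d) := fun t => (y2 - x) + t • u with hc
    have hcmem : ∀ t ∈ Set.Icc (0:ℝ) 1, c t ∈ Metric.ball (0 : EuclideanSpace ℝ (Fin d)) R := by
      intro t ht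
      rw [mem_ball_zero_iff]
      have hct : c t = (1 - t) • (y2 - x) + t • (y1 - x) := by rw [hc, hu]; module
      rw [hct]
      have hn := norm_add_le ((1 - t) • (y2 - x)) (t • (y1 - x))
      rw [norm_smul, norm_smul, Real.norm_eq_abs, Real.norm_eq_abs,
        abs_of_nonneg (by linarith [ht.2] : (0:ℝ) ≤ 1 - t), abs_of_nonneg ht.1] at hn
      have hkey : (1 - t) * ‖y2 - x‖ + t * ‖y1 - x‖ < R := by
        rcases lt_or_eq_of_le ht.1 with h | h
        · linarith [mul_pos h (sub_pos.mpr hR1),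
            mul_nonneg (sub_nonneg.mpr ht.2) (sub_nonneg.mpr hR2.le)]
        · rw [← h]; simpa using hR2
      linarith
    set g : ℝ → ℝ := fun t => (fderiv ℝ L (c t)) u with hg
    have hgd : ∀ t ∈ Set.Icc (0:ℝ) 1,
        HasDerivAt g (fderiv ℝ (fderiv ℝ L) (c t) u u) t := by
      intro t ht
      have hcurve : HasDerivAt c u t := by
        rw [hc]; simpa only [one_smul, id] using ((hasDerivAt_id t).smul_const u).const_add (y2 - x)
      have hop : HasDerivAt (fun t => fderiv ℝ L (c t)) (fderiv ℝ (fderiv ℝ L) (c t) u) t :=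
        (hB2diff (c t) (hcmem t ht)).comp_hasDerivAt t hcurve
      have := hop.clm_apply (hasDerivAt_const t u)
      simpa using this
    have hcont : ContinuousOn g (Set.Icc (0:ℝ) 1) :=
      fun t ht => (hgd t ht).continuousAt.continuousWithinAt
    obtain ⟨τ, hτ, hslope⟩ := exists_hasDerivAt_eq_slope g
      (fun t => fderiv ℝ (fderiv ℝ L) (c t) u u) one_pos hcont
      (fun t ht => hgd t (Set.Ioo_subset_Icc_self ht))
    have hc1 : c 1 = y1 - x := by rw [hc, hu]; module
    have hc0 : c 0 = y2 - x := by rw [hc]; module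
    have hgone : g 1 = ⟪p, u⟫ := by
      rw [hg]
      simp only [hc1, hg1.fderiv]
      exact InnerProductSpace.toDual_apply_apply
    have hgzero : g 0 = ⟪p, u⟫ := by
      rw [hg]
      simp only [hc0, hg2.fderiv]
      exact InnerProductSpace.toDual_apply_apply
    rw [hgone, hgzero] at hslope
    have hconv := hLconv (c τ) (hcmem τ (Set.Ioo_subset_Icc_self hτ)) u
    rw [hslope] at hconv
    rw [sub_self, zero_div] at hconv
    nlinarith [mul_pos hlam (pow_pos hupos 2)]
  obtain ⟨Tx, hTx⟩ := hexist
  obtain ⟨hTR, hTgrad, hTcontact⟩ := hmax Tx hTx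
  have hzball : Tx - x ∈ Metric.ball (0 : EuclideanSpace ℝ (Fin d)) R :=
    mem_ball_zero_iff.mpr hTR
  refine ⟨Tx, Set.eq_singleton_iff_unique_mem.mpr ⟨hTx, fun y hy => huniq y Tx hy hTx⟩,
    by rwa [norm_sub_rev], hasGradientAt_iff_hasFDerivAt.mpr hTgrad, ?_⟩
  intro A hAsymm hAlex
  have hineq : ∀ v : EuclideanSpace ℝ (Fin d),
      0 ≤ ⟪A v, v⟫ + fderiv ℝ (fderiv ℝ L) (Tx - x) v v := by
    intro v
    rcases eq_or_ne v 0 with rfl | hv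
    · simp
    have hvpos : 0 < ‖v‖ := norm_pos_iff.mpr hv
    by_contra hneg
    push_neg at hneg
    set Q := fderiv ℝ (fderiv ℝ L) (Tx - x) v v with hQ
    set κ := -(⟪A v, v⟫ + Q) with hκ
    have hκpos : 0 < κ := by rw [hκ]; linarith
    set ε := κ / (8 * ‖v‖ ^ 2) with hε
    have hεpos : 0 < ε := div_pos hκpos (by positivity)
    set ε' := κ / 8 with hε'
    have hε'pos : 0 < ε' := by rw [hε']; linarith
    obtain ⟨δ₁, hδ₁, hA⟩ := hAlex ε hεpos
    -- continuity of the second derivative along the segment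
    have hBc : ContinuousAt
        (fun s : ℝ => fderiv ℝ (fderiv ℝ L) ((Tx - x) - s • v) v v) 0 := by
      have h1 : Continuous (fun s : ℝ => (Tx - x) - s • v) :=
        continuous_const.sub (continuous_id.smul continuous_const)
      have h3 : ContinuousAt (fun s : ℝ => fderiv ℝ (fderiv ℝ L) ((Tx - x) - s • v)) 0 :=
        ContinuousAt.comp (by simpa using hB2cont.continuousAt (hball.mem_nhds hzball))
          h1.continuousAt
      have h4 : Continuous (fun T : EuclideanSpace ℝ (Fin d) →L[ℝ]
          (EuclideanSpace ℝ (Fin d) →L[ℝ] ℝ) => T v v) :=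
        ((ContinuousLinearMap.apply ℝ ℝ v).comp
          (ContinuousLinearMap.apply ℝ (EuclideanSpace ℝ (Fin d) →L[ℝ] ℝ) v)).continuous
      exact ContinuousAt.comp h4.continuousAt h3
    obtain ⟨t₀, ht₀pos, ht₀⟩ := Metric.continuousAt_iff.mp hBc ε' hε'pos
    set rT := min ρ (R - ‖Tx - x‖) with hrT
    have hrTpos : 0 < rT := lt_min hρ (by linarith)
    have hrTR : rT ≤ R - ‖Tx - x‖ := min_le_right _ _
    set t := min (t₀ / 2) (min (δ₁ / (2 * ‖v‖)) (rT / (2 * ‖v‖))) with ht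
    have htpos : 0 < t := by
      apply lt_min (by linarith)
      exact lt_min (by positivity) (by positivity)
    have htt₀ : t < t₀ := (min_le_left _ _).trans_lt (by linarith)
    have htδ : t * ‖v‖ < δ₁ := by
      have h1 : t ≤ δ₁ / (2 * ‖v‖) := (min_le_right _ _).trans (min_le_left _ _)
      have := mul_le_mul_of_nonneg_right h1 (norm_nonneg v)
      rw [div_mul_eq_mul_div] at this
      have h2 : δ₁ * ‖v‖ / (2 * ‖v‖) = δ₁ / 2 := by
        field_simp
      rw [h2] at this
      linarith
    have htrT : t * ‖v‖ < rT := by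
      have h1 : t ≤ rT / (2 * ‖v‖) := (min_le_right _ _).trans (min_le_right _ _)
      have := mul_le_mul_of_nonneg_right h1 (norm_nonneg v)
      rw [div_mul_eq_mul_div] at this
      have h2 : rT * ‖v‖ / (2 * ‖v‖) = rT / 2 := by
        field_simp
      rw [h2] at this
      linarith
    have cmem : ∀ s ∈ Set.Icc (0:ℝ) t,
        (Tx - x) - s • v ∈ Metric.ball (0 : EuclideanSpace ℝ (Fin d)) R := by
      intro s hs
      rw [mem_ball_zero_iff]
      have h1 : ‖(Tx - x) - s • v‖ ≤ ‖Tx - x‖ + ‖s • v‖ := norm_sub_le _ _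
      have h2 : ‖s • v‖ = s * ‖v‖ := by
        rw [norm_smul, Real.norm_eq_abs, abs_of_nonneg hs.1]
      have h3 : s * ‖v‖ ≤ t * ‖v‖ := mul_le_mul_of_nonneg_right hs.2 (norm_nonneg v)
      linarith
    have hderiv1 : ∀ s ∈ Set.Icc (0:ℝ) t,
        HasDerivAt (fun s : ℝ => L ((Tx - x) - s • v))
          (-((fderiv ℝ L ((Tx - x) - s • v)) v)) s := by
      intro s hs
      have hcurve : HasDerivAt (fun s : ℝ => (Tx - x) - s • v) (-v) s := by
        simpa using ((hasDerivAt_id s).smul_const v).const_sub (Tx - x)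
      have := (hLdiff _ (cmem s hs)).comp_hasDerivAt s hcurve
      simpa [Pi.sub_def, Function.comp_def] using this
    have hderiv2 : ∀ s ∈ Set.Icc (0:ℝ) t,
        HasDerivAt (fun s : ℝ => -((fderiv ℝ L ((Tx - x) - s • v)) v))
          (fderiv ℝ (fderiv ℝ L) ((Tx - x) - s • v) v v) s := by
      intro s hs
      have hcurve : HasDerivAt (fun s : ℝ => (Tx - x) - s • v) (-v) s := by
        simpa using ((hasDerivAt_id s).smul_const v).const_sub (Tx - x)
      have hop := (hB2diff _ (cmem s hs)).comp_hasDerivAt s hcurve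
      have := (hop.clm_apply (hasDerivAt_const s v)).neg
      simpa [Pi.sub_def, Pi.neg_def] using this
    have hbound : ∀ s ∈ Set.Icc (0:ℝ) t,
        |fderiv ℝ (fderiv ℝ L) ((Tx - x) - s • v) v v - Q| ≤ ε' := by
      intro s hs
      have hd : dist s 0 < t₀ := by
        rw [Real.dist_eq, sub_zero, abs_of_nonneg hs.1]
        exact lt_of_le_of_lt hs.2 htt₀
      have := ht₀ hd
      rw [Real.dist_eq] at this
      simp only [zero_smul, sub_zero] at this
      exact this.le
    have htay := taylor2_bound (fun s : ℝ => L ((Tx - x) - s • v))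
      (fun s : ℝ => -((fderiv ℝ L ((Tx - x) - s • v)) v))
      (fun s : ℝ => fderiv ℝ (fderiv ℝ L) ((Tx - x) - s • v) v v)
      Q ε' t htpos hε'pos.le hderiv1 hderiv2 hbound
    simp only [zero_smul, sub_zero] at htay
    have hψ'0 : (fderiv ℝ L (Tx - x)) v = ⟪p, v⟫ := by
      rw [hTgrad.fderiv]
      exact InnerProductSpace.toDual_apply_apply
    rw [hψ'0] at htay
    -- Alexandrov estimate at x + t • v
    have hyx : (x + t • v) - x = t • v := by abel
    have htv : ‖t • v‖ = t * ‖v‖ := by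
      rw [norm_smul, Real.norm_eq_abs, abs_of_nonneg htpos.le]
    have hAt := hA (x + t • v) (by rw [hyx, htv]; exact htδ)
    rw [hyx] at hAt
    have hip : ⟪p, t • v⟫ = t * ⟪p, v⟫ := real_inner_smul_right p v t
    have hiA : ⟪A (t • v), t • v⟫ = t * (t * ⟪A v, v⟫) := by
      rw [map_smul, real_inner_smul_left, real_inner_smul_right]
    rw [hip, hiA, htv, mul_pow] at hAt
    -- contact inequality at x + t • v
    have hmem : x + t • v ∈ Metric.ball x rT := by
      rw [mem_ball, dist_eq_norm, hyx, htv]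
      exact htrT
    have hcon := hTcontact (x + t • v) hmem
    have hTsub : Tx - (x + t • v) = (Tx - x) - t • v := by abel
    rw [hTsub] at hcon
    -- combine everything
    obtain ⟨hlow, hhigh⟩ := abs_le.mp htay
    obtain ⟨hlow2, hhigh2⟩ := abs_le.mp hAt
    have hPQ : ⟪A v, v⟫ + Q = -κ := by rw [hκ]; ring
    have hεv : ε * ‖v‖ ^ 2 = κ / 8 := by
      rw [hε]; field_simp
    have hsum : 0 ≤ t ^ 2 / 2 * (⟪A v, v⟫ + Q) + ε * ‖v‖ ^ 2 * t ^ 2 + ε' * t ^ 2 := by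
      linarith [hhigh, hhigh2, hcon]
    rw [hPQ, hεv, hε'] at hsum
    nlinarith [mul_pos (pow_pos htpos 2) hκpos]
  refine ⟨hineq, ?_⟩
  intro HL HLinv hHLB hi1 hi2
  have hsym2 : ∀ v w : EuclideanSpace ℝ (Fin d),
      fderiv ℝ (fderiv ℝ L) (Tx - x) v w = fderiv ℝ (fderiv ℝ L) (Tx - x) w v := by
    intro v w
    refine second_derivative_symmetric_of_eventually (f := L) (f' := fderiv ℝ L)
      (x := Tx - x) ?_ ?_ v w
    · filter_upwards [hball.mem_nhds hzball] with w' hw' using hLdiff w' hw'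
    · exact hB2diff _ hzball
  refine diag_lemma A HL HLinv hAsymm ?_ ?_ hi1 hi2 ?_
  · intro u v
    rw [hHLB u v, hsym2 u v, ← hHLB v u]
    exact real_inner_comm u (HL v)
  · intro v hv
    rw [hHLB v v]
    have := hLconv _ hzball v
    have hv' : 0 < ‖v‖ := norm_pos_iff.mpr hv
    nlinarith [mul_pos hlam (pow_pos hv' 2)]
  · intro v
    rw [hHLB v v]
    exact hineq v
end
end

section
/- Assume that for every c > 0 in the interior of the domain D(E), the matrix 𝔹(c) is positive semidefinite and (d−1)(ε₁(c) − ε₀(c)) ≥ 0. Then: (i) the map c ↦ c^{−2/(d+2)} E(c) is nondecreasing on (0,∞), i.e. for all 0 < c₁ < c₂ one has E(c₁) ≤ (c₁/c₂)^{2/(d+2)} E(c₂); (ii) for all ρ, γ > 0 with γ^{d+2}/ρ^d in the interior of D(E), one has (1 − 4/d²) ρ ∂_ρ N_E(ρ, γ) + γ ∂_γ N_E(ρ, γ) ≥ 0; (iii) for all ρ, γ > 0, the map s ↦ N_E(s^{1−4/d²} ρ, s γ) is nondecreasing on (0,∞). -/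
noncomputable section

open scoped Classical

/-- `ε₁(c) = c E'(c)`. -/
def eps1 (Ef : ℝ → ℝ) (c : ℝ) : ℝ := c * deriv Ef c

/-- `ε₂(c) = c² E''(c)`. -/
def eps2 (Ef : ℝ → ℝ) (c : ℝ) : ℝ := c ^ 2 * deriv (deriv Ef) c

/-- The symmetric 2×2 matrix `𝔹(c)`. -/
def BmatE (d : ℕ) (Ef : ℝ → ℝ) (c : ℝ) : Matrix (Fin 2) (Fin 2) ℝ :=
  !![eps2 Ef c - ((d : ℝ) - 1) / d * (eps1 Ef c - Ef c),
     eps2 Ef c - 1 / 2 * (eps1 Ef c - Ef c);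
     eps2 Ef c - 1 / 2 * (eps1 Ef c - Ef c),
     eps2 Ef c + 1 / 2 * eps1 Ef c]

/-- `N_E(ρ,γ) = (ρ/γ)^d E(γ^{d+2}/ρ^d)`, with extended-real values. -/
def NEfun (d : ℕ) (Efun : ℝ → EReal) (ρ γ : ℝ) : EReal :=
  (((ρ / γ) ^ d : ℝ) : EReal) * Efun (γ ^ (d + 2) / ρ ^ d)

/-- The real-valued version of `N_E` built from a real representative `Ef` of `E`. -/
def NEreal (d : ℕ) (Ef : ℝ → ℝ) (ρ γ : ℝ) : ℝ :=
  (ρ / γ) ^ d * Ef (γ ^ (d + 2) / ρ ^ d)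

set_option maxHeartbeats 1000000 in
theorem statement_16 (d : ℕ) (hd : 1 ≤ d)
    (Efun : ℝ → EReal)
    (hbot : ∀ c, Efun c ≠ ⊥)
    (hE0 : Efun 0 = 0)
    (hlsc : LowerSemicontinuousOn Efun (Set.Ici 0))
    (hconvE : ∀ c₁ ∈ Set.Ici (0 : ℝ), ∀ c₂ ∈ Set.Ici (0 : ℝ), ∀ t ∈ Set.Icc (0 : ℝ) 1,
      Efun (t * c₁ + (1 - t) * c₂) ≤
        (t : EReal) * Efun c₁ + ((1 - t : ℝ) : EReal) * Efun c₂)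
    (hfin : ∃ c₀ > (0 : ℝ), Efun c₀ ≠ ⊤)
    (Ef : ℝ → ℝ)
    (hrep : ∀ c ∈ interior {c : ℝ | 0 ≤ c ∧ Efun c ≠ ⊤}, Efun c = ((Ef c : ℝ) : EReal))
    (hC2 : ContDiffOn ℝ 2 Ef (interior {c : ℝ | 0 ≤ c ∧ Efun c ≠ ⊤}))
    (hB : ∀ c ∈ interior {c : ℝ | 0 ≤ c ∧ Efun c ≠ ⊤}, 0 < c →
      (BmatE d Ef c).PosSemidef ∧ 0 ≤ ((d : ℝ) - 1) * (eps1 Ef c - Ef c)) :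
    (∀ c₁ c₂ : ℝ, 0 < c₁ → c₁ < c₂ →
      Efun c₁ ≤ (((c₁ / c₂) ^ (2 / ((d : ℝ) + 2)) : ℝ) : EReal) * Efun c₂) ∧
    (∀ ρ γ : ℝ, 0 < ρ → 0 < γ →
      γ ^ (d + 2) / ρ ^ d ∈ interior {c : ℝ | 0 ≤ c ∧ Efun c ≠ ⊤} →
      0 ≤ (1 - 4 / (d : ℝ) ^ 2) * ρ * deriv (fun r => NEreal d Ef r γ) ρ +
          γ * deriv (fun g => NEreal d Ef ρ g) γ) ∧
    (∀ ρ γ s₁ s₂ : ℝ, 0 < ρ → 0 < γ → 0 < s₁ → s₁ ≤ s₂ →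
      NEfun d Efun (s₁ ^ (1 - 4 / (d : ℝ) ^ 2) * ρ) (s₁ * γ) ≤
        NEfun d Efun (s₂ ^ (1 - 4 / (d : ℝ) ^ 2) * ρ) (s₂ * γ)) := by
  have hd0 : (0:ℝ) < (d:ℝ) := by exact_mod_cast hd
  have hd2 : (0:ℝ) < (d:ℝ) + 2 := by linarith
  set S : Set ℝ := {c : ℝ | 0 ≤ c ∧ Efun c ≠ ⊤} with hSdef
  set U : Set ℝ := interior S with hUdef
  set α : ℝ := 2 / ((d:ℝ) + 2) with hα
  have hα0 : 0 < α := by positivity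
  have hUopen : IsOpen U := isOpen_interior
  have hUpos : ∀ c ∈ U, 0 < c := by
    intro c hc
    have h1 : U ⊆ interior (Set.Ici (0:ℝ)) := interior_mono (fun x hx => hx.1)
    have h2 := h1 hc
    rwa [interior_Ici, Set.mem_Ioi] at h2
  -- membership lemma: Ioo 0 b ⊆ U whenever b ∈ S
  have hIoo : ∀ b : ℝ, 0 ≤ b → Efun b ≠ ⊤ → Set.Ioo 0 b ⊆ U := by
    intro b hb0 hbt
    have hsub : Set.Ioo 0 b ⊆ S := by
      intro x hx
      have hxb : 0 < b := lt_trans hx.1 hx.2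
      obtain ⟨y, hy⟩ : ∃ y : ℝ, Efun b = (y : EReal) :=
        ⟨(Efun b).toReal, (EReal.coe_toReal hbt (hbot b)).symm⟩
      have ht : x / b ∈ Set.Icc (0:ℝ) 1 :=
        ⟨div_nonneg hx.1.le hxb.le, by rw [div_le_one hxb]; exact hx.2.le⟩
      have hcv := hconvE b (Set.mem_Ici.2 hb0) 0 (Set.mem_Ici.2 le_rfl) (x/b) ht
      have hxeq : (x/b) * b + (1 - x/b) * 0 = x := by field_simp; ring
      rw [hxeq, hE0, hy] at hcv
      refine ⟨hx.1.le, ?_⟩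
      intro htop
      rw [htop] at hcv
      simp only [mul_zero, add_zero, ← EReal.coe_mul] at hcv
      exact (EReal.coe_ne_top _) (top_le_iff.1 hcv)
    exact interior_maximal hsub isOpen_Ioo
  have hdiff : ∀ c ∈ U, DifferentiableAt ℝ Ef c := by
    intro c hc
    exact (hC2.differentiableOn (by norm_num)).differentiableAt (hUopen.mem_nhds hc)
  have hcontU : ContinuousOn Ef U := hC2.continuousOn
  -- the key differential inequality from positive semidefiniteness of 𝔹
  have hkey : ∀ c ∈ U, 2 * Ef c ≤ ((d:ℝ) + 2) * (c * deriv Ef c) := by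
    intro c hc
    have hc0 := hUpos c hc
    have hpsd := (hB c hc hc0).1
    have h := hpsd.dotProduct_mulVec_nonneg ![1, -1]
    simp [BmatE, Matrix.mulVec, dotProduct, Fin.sum_univ_two] at h
    have hdne : (d:ℝ) ≠ 0 := hd0.ne'
    have key : 0 ≤ (eps1 Ef c - Ef c) + (d:ℝ)/2 * eps1 Ef c := by
      have hh : 0 ≤ (d:ℝ) * (2⁻¹ * (eps1 Ef c - Ef c) - ((d:ℝ) - 1) / (d:ℝ) * (eps1 Ef c - Ef c) +
          (eps2 Ef c + 2⁻¹ * eps1 Ef c + (2⁻¹ * (eps1 Ef c - Ef c) - eps2 Ef c))) :=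
        mul_nonneg hd0.le h
      have hex : (d:ℝ) * (2⁻¹ * (eps1 Ef c - Ef c) - ((d:ℝ) - 1) / (d:ℝ) * (eps1 Ef c - Ef c) +
          (eps2 Ef c + 2⁻¹ * eps1 Ef c + (2⁻¹ * (eps1 Ef c - Ef c) - eps2 Ef c)))
          = (eps1 Ef c - Ef c) + (d:ℝ)/2 * eps1 Ef c := by
        field_simp
        ring
      linarith [hex ▸ hh]
    simp only [eps1] at key
    linarith
  -- derivative of the monotone quantity g(x) = x^(-α) * Ef x
  have hgderiv : ∀ x ∈ U, HasDerivAt (fun y : ℝ => y ^ (-α) * Ef y)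
      (x ^ (-α - 1) * (x * deriv Ef x - α * Ef x)) x := by
    intro x hx
    have hx0 := hUpos x hx
    have h1 : HasDerivAt (fun y : ℝ => y ^ (-α)) (-α * x ^ (-α - 1)) x := by
      simpa using Real.hasDerivAt_rpow_const (p := -α) (Or.inl hx0.ne')
    have h3 := h1.mul (hdiff x hx).hasDerivAt
    refine h3.congr_deriv ?_; symm
    have hpow : x ^ (-α) = x ^ (-α - 1) * x := by
      rw [← Real.rpow_add_one hx0.ne' (-α - 1)]
      ring_nf
    rw [hpow]; ring
  have hgnonneg : ∀ x ∈ U, 0 ≤ x ^ (-α - 1) * (x * deriv Ef x - α * Ef x) := by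
    intro x hx
    have hx0 := hUpos x hx
    apply mul_nonneg (Real.rpow_nonneg hx0.le _)
    have hk := hkey x hx
    have : α * Ef x ≤ x * deriv Ef x := by
      rw [hα, div_mul_eq_mul_div, div_le_iff₀ hd2]
      linarith
    linarith
  -- monotonicity of g on Ioo 0 b for b ∈ S
  have hmono : ∀ b : ℝ, 0 ≤ b → Efun b ≠ ⊤ →
      MonotoneOn (fun y : ℝ => y ^ (-α) * Ef y) (Set.Ioo 0 b) := by
    intro b hb0 hbt
    have hsubU : Set.Ioo 0 b ⊆ U := hIoo b hb0 hbt
    apply monotoneOn_of_deriv_nonneg (convex_Ioo 0 b)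
    · intro x hx
      exact ((hgderiv x (hsubU hx)).continuousAt).continuousWithinAt
    · intro x hx
      rw [isOpen_Ioo.interior_eq] at hx
      exact ((hgderiv x (hsubU hx)).differentiableAt).differentiableWithinAt
    · intro x hx
      rw [isOpen_Ioo.interior_eq] at hx
      rw [(hgderiv x (hsubU hx)).deriv]
      exact hgnonneg x (hsubU hx)
  -- the core real inequality
  have core : ∀ c₂ : ℝ, 0 < c₂ → Efun c₂ ≠ ⊤ → ∀ c₁ : ℝ, 0 < c₁ → c₁ < c₂ →
      Ef c₁ ≤ (c₁ / c₂) ^ α * (Efun c₂).toReal := by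
    intro c₂ hc2 htop c₁ hc1 hlt
    set ℓ := (Efun c₂).toReal with hℓdef
    have hℓ : Efun c₂ = (ℓ : EReal) := (EReal.coe_toReal htop (hbot c₂)).symm
    have hc1U : c₁ ∈ U := hIoo c₂ hc2.le htop ⟨hc1, hlt⟩
    set φ : ℝ → ℝ := fun t => (c₁ / (t * c₁ + (1 - t) * c₂)) ^ α * (t * Ef c₁ + (1 - t) * ℓ)
      with hφdef
    have hφ0 : φ 0 = (c₁ / c₂) ^ α * ℓ := by simp [hφdef]
    have hcont0 : ContinuousAt φ 0 := by
      have hbase : ContinuousAt (fun t : ℝ => c₁ / (t * c₁ + (1 - t) * c₂)) 0 := by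
        apply ContinuousAt.div continuousAt_const (by fun_prop)
        simpa using hc2.ne'
      exact (hbase.rpow_const (Or.inr hα0.le)).mul (by fun_prop)
    have htend : Filter.Tendsto φ (nhdsWithin 0 (Set.Ioi 0)) (nhds ((c₁ / c₂) ^ α * ℓ)) := by
      rw [← hφ0]
      exact hcont0.continuousWithinAt.tendsto
    have hev : ∀ᶠ t in nhdsWithin 0 (Set.Ioi 0), Ef c₁ ≤ φ t := by
      filter_upwards [Ioo_mem_nhdsGT_of_mem (Set.left_mem_Ico.2 one_pos)] with t ht
      have hcc : c₁ < t * c₁ + (1 - t) * c₂ := by nlinarith [ht.1, ht.2, hlt]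
      have hcc2 : t * c₁ + (1 - t) * c₂ < c₂ := by nlinarith [ht.1, ht.2, hlt]
      set c := t * c₁ + (1 - t) * c₂ with hcdef
      have hc0 : 0 < c := lt_trans hc1 hcc
      have hcU : c ∈ U := hIoo c₂ hc2.le htop ⟨hc0, hcc2⟩
      have hg : c₁ ^ (-α) * Ef c₁ ≤ c ^ (-α) * Ef c :=
        hmono c₂ hc2.le htop ⟨hc1, hlt⟩ ⟨hc0, hcc2⟩ hcc.le
      have hconv' : Ef c ≤ t * Ef c₁ + (1 - t) * ℓ := by
        have hcv := hconvE c₁ (Set.mem_Ici.2 hc1.le) c₂ (Set.mem_Ici.2 hc2.le) t ⟨ht.1.le, ht.2.le⟩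
        rw [← hcdef, hrep c hcU, hrep c₁ hc1U, hℓ, ← EReal.coe_mul, ← EReal.coe_mul,
          ← EReal.coe_add] at hcv
        exact_mod_cast hcv
      have step1 : Ef c₁ ≤ (c₁ / c) ^ α * Ef c := by
        have hc1p : (0:ℝ) < c₁ ^ α := Real.rpow_pos_of_pos hc1 α
        have hrw : (c₁ / c) ^ α = c₁ ^ α * c ^ (-α) := by
          rw [Real.div_rpow hc1.le hc0.le, Real.rpow_neg hc0.le, div_eq_mul_inv]
        calc Ef c₁ = c₁ ^ α * (c₁ ^ (-α) * Ef c₁) := by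
              rw [← mul_assoc, ← Real.rpow_add hc1]
              simp
          _ ≤ c₁ ^ α * (c ^ (-α) * Ef c) := mul_le_mul_of_nonneg_left hg hc1p.le
          _ = (c₁ / c) ^ α * Ef c := by rw [hrw]; ring
      calc Ef c₁ ≤ (c₁ / c) ^ α * Ef c := step1
        _ ≤ (c₁ / c) ^ α * (t * Ef c₁ + (1 - t) * ℓ) :=
            mul_le_mul_of_nonneg_left hconv' (Real.rpow_nonneg (by positivity) _)
        _ = φ t := rfl
    exact ge_of_tendsto htend hev
  refine ⟨?_, ?_, ?_⟩
  · -- part (i)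
    intro c₁ c₂ hc1 hlt
    by_cases htop : Efun c₂ = ⊤
    · rw [htop, EReal.coe_mul_top_of_pos (Real.rpow_pos_of_pos (div_pos hc1 (hc1.trans hlt)) α)]
      exact le_top
    · have hc1U : c₁ ∈ U := hIoo c₂ (hc1.trans hlt).le htop ⟨hc1, hlt⟩
      have hcore := core c₂ (hc1.trans hlt) htop c₁ hc1 hlt
      rw [hrep c₁ hc1U, show Efun c₂ = ((Efun c₂).toReal : EReal) from
        (EReal.coe_toReal htop (hbot c₂)).symm, ← EReal.coe_mul]
      exact_mod_cast hcore
  · -- part (ii)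
    intro ρ γ hρ hγ hcU
    have hρne : ρ ≠ 0 := hρ.ne'
    have hγne : γ ≠ 0 := hγ.ne'
    have hstep : ∀ x : ℝ, x ^ (d - 1) * x = x ^ d := by
      intro x
      conv_rhs => rw [show d = d - 1 + 1 from (Nat.succ_pred_eq_of_pos hd).symm]
      rw [pow_succ]
    set c := γ ^ (d + 2) / ρ ^ d with hcdef
    have hc0 : 0 < c := div_pos (pow_pos hγ _) (pow_pos hρ _)
    have hP : 0 < (ρ / γ) ^ d := pow_pos (div_pos hρ hγ) d
    have hEd := (hdiff c hcU).hasDerivAt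
    have h1 : HasDerivAt (fun r : ℝ => (r / γ) ^ d) ((d:ℝ) * (ρ / γ) ^ d / ρ) ρ := by
      have h := HasDerivAt.comp ρ (hasDerivAt_pow d (ρ / γ)) ((hasDerivAt_id ρ).div_const γ)
      refine h.congr_deriv ?_; symm
      rw [← hstep (ρ / γ)]
      field_simp
    have h2 : HasDerivAt (fun r : ℝ => γ ^ (d + 2) / r ^ d) (-(d:ℝ) * c / ρ) ρ := by
      have hinv := (hasDerivAt_pow d ρ).inv (pow_ne_zero d hρne)
      have h := hinv.const_mul (γ ^ (d + 2))
      have hfun : (fun r : ℝ => γ ^ (d + 2) / r ^ d) = fun r : ℝ => γ ^ (d + 2) * (r ^ d)⁻¹ := by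
        funext r; rw [div_eq_mul_inv]
      rw [hfun]
      refine h.congr_deriv ?_; symm
      rw [hcdef, ← hstep ρ]
      field_simp
    have h3 : HasDerivAt (fun r : ℝ => Ef (γ ^ (d + 2) / r ^ d))
        (deriv Ef c * (-(d:ℝ) * c / ρ)) ρ := HasDerivAt.comp ρ hEd h2
    have h4 := h1.mul h3
    have hDρ : deriv (fun r => NEreal d Ef r γ) ρ
        = (d:ℝ) * (ρ / γ) ^ d / ρ * Ef c + (ρ / γ) ^ d * (deriv Ef c * (-(d:ℝ) * c / ρ)) := by
      have hfe : (fun r => NEreal d Ef r γ) = fun r : ℝ => (r / γ) ^ d * Ef (γ ^ (d + 2) / r ^ d) :=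
        rfl
      rw [hfe]
      exact h4.deriv
    have g1 : HasDerivAt (fun g : ℝ => (ρ / g) ^ d) (-(d:ℝ) * (ρ / γ) ^ d / γ) γ := by
      have hin : HasDerivAt (fun g : ℝ => ρ / g) (-(ρ / γ ^ 2)) γ := by
        have h := (hasDerivAt_inv hγne).const_mul ρ
        have hfun : (fun g : ℝ => ρ / g) = fun g : ℝ => ρ * g⁻¹ := by
          funext g; rw [div_eq_mul_inv]
        rw [hfun]
        refine h.congr_deriv ?_; symm
        field_simp
      have h := HasDerivAt.comp γ (hasDerivAt_pow d (ρ / γ)) hin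
      refine h.congr_deriv ?_; symm
      rw [← hstep (ρ / γ)]
      field_simp
    have g2 : HasDerivAt (fun g : ℝ => g ^ (d + 2) / ρ ^ d) (((d:ℝ) + 2) * c / γ) γ := by
      have h := (hasDerivAt_pow (d + 2) γ).div_const (ρ ^ d)
      refine h.congr_deriv ?_; symm
      rw [hcdef, show d + 2 - 1 = d + 1 from rfl,
        show γ ^ (d + 2) = γ ^ (d + 1) * γ from pow_succ γ (d + 1)]
      push_cast
      field_simp
    have g3 : HasDerivAt (fun g : ℝ => Ef (g ^ (d + 2) / ρ ^ d))
        (deriv Ef c * (((d:ℝ) + 2) * c / γ)) γ := HasDerivAt.comp γ hEd g2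
    have g4 := g1.mul g3
    have hDγ : deriv (fun g => NEreal d Ef ρ g) γ
        = -(d:ℝ) * (ρ / γ) ^ d / γ * Ef c + (ρ / γ) ^ d * (deriv Ef c * (((d:ℝ) + 2) * c / γ)) := by
      have hfe : (fun g => NEreal d Ef ρ g) = fun g : ℝ => (ρ / g) ^ d * Ef (g ^ (d + 2) / ρ ^ d) :=
        rfl
      rw [hfe]
      exact g4.deriv
    have hk := hkey c hcU
    have hfinal : (1 - 4 / (d:ℝ) ^ 2) * ρ *
          ((d:ℝ) * (ρ / γ) ^ d / ρ * Ef c + (ρ / γ) ^ d * (deriv Ef c * (-(d:ℝ) * c / ρ)))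
        + γ * (-(d:ℝ) * (ρ / γ) ^ d / γ * Ef c
            + (ρ / γ) ^ d * (deriv Ef c * (((d:ℝ) + 2) * c / γ)))
        = 2 * (ρ / γ) ^ d / (d:ℝ) * (((d:ℝ) + 2) * (c * deriv Ef c) - 2 * Ef c) := by
      field_simp
      ring
    rw [hDρ, hDγ, hfinal]
    exact mul_nonneg (div_nonneg (by linarith) hd0.le) (by linarith)
  · -- part (iii)
    intro ρ γ s₁ s₂ hρ hγ hs1 hle
    rcases eq_or_lt_of_le hle with rfl | hlt
    · exact le_rfl
    have hs2 : 0 < s₂ := lt_trans hs1 hlt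
    have hdne : (d:ℝ) ≠ 0 := hd0.ne'
    have hc₀ : 0 < γ ^ (d + 2) / ρ ^ d := div_pos (pow_pos hγ _) (pow_pos hρ _)
    have hm0 : (0:ℝ) < 2 + 4 / (d:ℝ) := by positivity
    have key : ∀ s : ℝ, 0 < s → NEfun d Efun (s ^ (1 - 4 / (d:ℝ) ^ 2) * ρ) (s * γ)
        = ((s ^ (-(4 / (d:ℝ))) * (ρ / γ) ^ d : ℝ) : EReal) *
            Efun (s ^ (2 + 4 / (d:ℝ)) * (γ ^ (d + 2) / ρ ^ d)) := by
      intro s hs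
      have h1 : (s ^ (1 - 4 / (d:ℝ) ^ 2) * ρ / (s * γ)) ^ d
          = s ^ (-(4 / (d:ℝ))) * (ρ / γ) ^ d := by
        have hq : s ^ (1 - 4 / (d:ℝ) ^ 2) * ρ / (s * γ)
            = s ^ (1 - 4 / (d:ℝ) ^ 2 - 1) * (ρ / γ) := by
          rw [show (1 - 4 / (d:ℝ) ^ 2 - 1) = (1 - 4 / (d:ℝ) ^ 2) + (-1) by ring,
            Real.rpow_add hs, Real.rpow_neg hs.le, Real.rpow_one]
          field_simp
        rw [hq, mul_pow, ← Real.rpow_natCast (s ^ (1 - 4 / (d:ℝ) ^ 2 - 1)) d,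
          ← Real.rpow_mul hs.le]
        congr 2
        field_simp
        ring
      have h2 : (s * γ) ^ (d + 2) / (s ^ (1 - 4 / (d:ℝ) ^ 2) * ρ) ^ d
          = s ^ (2 + 4 / (d:ℝ)) * (γ ^ (d + 2) / ρ ^ d) := by
        rw [mul_pow, mul_pow, ← Real.rpow_natCast (s ^ (1 - 4 / (d:ℝ) ^ 2)) d,
          ← Real.rpow_mul hs.le, ← Real.rpow_natCast s (d + 2), mul_div_mul_comm,
          ← Real.rpow_sub hs]
        congr 2
        push_cast
        field_simp
        ring
      rw [NEfun, h1, h2]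
    rw [key s₁ hs1, key s₂ hs2]
    have hP : 0 < (ρ / γ) ^ d := pow_pos (div_pos hρ hγ) d
    by_cases htop : Efun (s₂ ^ (2 + 4 / (d:ℝ)) * (γ ^ (d + 2) / ρ ^ d)) = ⊤
    · rw [htop, EReal.coe_mul_top_of_pos
        (mul_pos (Real.rpow_pos_of_pos hs2 _) hP)]
      exact le_top
    · have hc₂pos : 0 < s₂ ^ (2 + 4 / (d:ℝ)) * (γ ^ (d + 2) / ρ ^ d) :=
        mul_pos (Real.rpow_pos_of_pos hs2 _) hc₀
      have hc₁pos : 0 < s₁ ^ (2 + 4 / (d:ℝ)) * (γ ^ (d + 2) / ρ ^ d) :=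
        mul_pos (Real.rpow_pos_of_pos hs1 _) hc₀
      have hc12 : s₁ ^ (2 + 4 / (d:ℝ)) * (γ ^ (d + 2) / ρ ^ d)
          < s₂ ^ (2 + 4 / (d:ℝ)) * (γ ^ (d + 2) / ρ ^ d) :=
        mul_lt_mul_of_pos_right (Real.rpow_lt_rpow hs1.le hlt hm0) hc₀
      have hc1U : s₁ ^ (2 + 4 / (d:ℝ)) * (γ ^ (d + 2) / ρ ^ d) ∈ U :=
        hIoo _ hc₂pos.le htop ⟨hc₁pos, hc12⟩
      have hcore := core _ hc₂pos htop _ hc₁pos hc12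
      rw [hrep _ hc1U, show Efun (s₂ ^ (2 + 4 / (d:ℝ)) * (γ ^ (d + 2) / ρ ^ d))
          = ((Efun (s₂ ^ (2 + 4 / (d:ℝ)) * (γ ^ (d + 2) / ρ ^ d))).toReal : EReal) from
          (EReal.coe_toReal htop (hbot _)).symm,
        ← EReal.coe_mul, ← EReal.coe_mul, EReal.coe_le_coe_iff]
      set ℓ := (Efun (s₂ ^ (2 + 4 / (d:ℝ)) * (γ ^ (d + 2) / ρ ^ d))).toReal with hℓdef
      have hk1 : (0:ℝ) ≤ s₁ ^ (-(4 / (d:ℝ))) * (ρ / γ) ^ d :=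
        (mul_pos (Real.rpow_pos_of_pos hs1 _) hP).le
      have hfac : s₁ ^ (-(4 / (d:ℝ))) * (ρ / γ) ^ d *
            (s₁ ^ (2 + 4 / (d:ℝ)) * (γ ^ (d + 2) / ρ ^ d)
              / (s₂ ^ (2 + 4 / (d:ℝ)) * (γ ^ (d + 2) / ρ ^ d))) ^ α
          = s₂ ^ (-(4 / (d:ℝ))) * (ρ / γ) ^ d := by
        have hq : s₁ ^ (2 + 4 / (d:ℝ)) * (γ ^ (d + 2) / ρ ^ d)
            / (s₂ ^ (2 + 4 / (d:ℝ)) * (γ ^ (d + 2) / ρ ^ d)) = (s₁ / s₂) ^ (2 + 4 / (d:ℝ)) := by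
          rw [Real.div_rpow hs1.le hs2.le, mul_div_mul_right _ _ hc₀.ne']
        have h5 : ((s₁ / s₂) ^ (2 + 4 / (d:ℝ))) ^ α = (s₁ / s₂) ^ (4 / (d:ℝ)) := by
          rw [← Real.rpow_mul (div_nonneg hs1.le hs2.le)]
          congr 1
          rw [hα]
          field_simp
          ring
        rw [hq, h5, Real.div_rpow hs1.le hs2.le, Real.rpow_neg hs1.le, Real.rpow_neg hs2.le]
        have hn1 : s₁ ^ (4 / (d:ℝ)) ≠ 0 := (Real.rpow_pos_of_pos hs1 _).ne'
        have hn2 : s₂ ^ (4 / (d:ℝ)) ≠ 0 := (Real.rpow_pos_of_pos hs2 _).ne'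
        field_simp
      calc s₁ ^ (-(4 / (d:ℝ))) * (ρ / γ) ^ d * Ef (s₁ ^ (2 + 4 / (d:ℝ)) * (γ ^ (d + 2) / ρ ^ d))
          ≤ s₁ ^ (-(4 / (d:ℝ))) * (ρ / γ) ^ d *
            ((s₁ ^ (2 + 4 / (d:ℝ)) * (γ ^ (d + 2) / ρ ^ d)
              / (s₂ ^ (2 + 4 / (d:ℝ)) * (γ ^ (d + 2) / ρ ^ d))) ^ α * ℓ) :=
            mul_le_mul_of_nonneg_left hcore hk1
        _ = s₂ ^ (-(4 / (d:ℝ))) * (ρ / γ) ^ d * ℓ := by rw [← hfac]; ring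
end
end

section
/- Let q, δ : I → (0, ∞) be twice differentiable, and suppose there exist functions ξ : I → ℝ, g : I → ℝ^d, and A : I → ℝ^{d×d} such that on I: q' = 2 ξ q, q'' = |g|² q, δ' = tr(A) δ, and δ'' = ( (tr A)² − |A|_F² − 4 |g|² − 4 ξ tr A ) δ. Define γ := q and ρ := q δ^{1/d}. Then for all t ∈ I one has γ''(t)/γ(t) ≥ 0 and ρ''(t)/ρ(t) ≤ (1 − 4/d) γ''(t)/γ(t), and for d = 1 the latter holds with equality. -/
noncomputable section

theorem statement_17 (d : ℕ) (hd : 1 ≤ d)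
    (I : Set ℝ) (hIopen : IsOpen I) (hIconv : Convex ℝ I)
    (q δ : ℝ → ℝ)
    (hqpos : ∀ t ∈ I, 0 < q t) (hδpos : ∀ t ∈ I, 0 < δ t)
    (hqdiff : ∀ t ∈ I, DifferentiableAt ℝ q t ∧ DifferentiableAt ℝ (deriv q) t)
    (hδdiff : ∀ t ∈ I, DifferentiableAt ℝ δ t ∧ DifferentiableAt ℝ (deriv δ) t)
    (ξ : ℝ → ℝ) (g : ℝ → EuclideanSpace ℝ (Fin d))
    (A : ℝ → Matrix (Fin d) (Fin d) ℝ)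
    (hq' : ∀ t ∈ I, deriv q t = 2 * ξ t * q t)
    (hq'' : ∀ t ∈ I, deriv (deriv q) t = ‖g t‖ ^ 2 * q t)
    (hδ' : ∀ t ∈ I, deriv δ t = (A t).trace * δ t)
    (hδ'' : ∀ t ∈ I, deriv (deriv δ) t =
      ((A t).trace ^ 2 - (∑ i, ∑ j, (A t i j) ^ 2) - 4 * ‖g t‖ ^ 2 -
        4 * ξ t * (A t).trace) * δ t) :
    ∀ t ∈ I,
      0 ≤ deriv (deriv q) t / q t ∧
      deriv (deriv (fun u => q u * δ u ^ (1 / (d : ℝ)))) t /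
          (q t * δ t ^ (1 / (d : ℝ))) ≤
        (1 - 4 / (d : ℝ)) * (deriv (deriv q) t / q t) ∧
      (d = 1 →
        deriv (deriv (fun u => q u * δ u ^ (1 / (d : ℝ)))) t /
            (q t * δ t ^ (1 / (d : ℝ))) =
          (1 - 4 / (d : ℝ)) * (deriv (deriv q) t / q t)) := by
  intro t ht
  have hdpos : (0:ℝ) < (d:ℝ) := by exact_mod_cast hd
  set c : ℝ := 1 / (d : ℝ) with hcdef
  have hc0 : 0 < c := by positivity
  have hcd : c * (d:ℝ) = 1 := by rw [hcdef]; field_simp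
  have hQ : 0 < q t := hqpos t ht
  have hD : 0 < δ t := hδpos t ht
  have hP : 0 < δ t ^ c := Real.rpow_pos_of_pos hD c
  -- notation
  set G : ℝ := ‖g t‖ ^ 2 with hGdef
  have hG0 : 0 ≤ G := by positivity
  set T : ℝ := (A t).trace with hTdef
  set S : ℝ := ∑ i, ∑ j, (A t i j) ^ 2 with hSdef
  -- Cauchy–Schwarz: T^2 ≤ d * S
  have hCS : T ^ 2 ≤ (d:ℝ) * S := by
    have h1 : (∑ i : Fin d, A t i i) ^ 2
        ≤ (Finset.univ.card : ℝ) * ∑ i : Fin d, (A t i i) ^ 2 :=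
      sq_sum_le_card_mul_sum_sq
    have h2 : ∑ i : Fin d, (A t i i) ^ 2 ≤ S := by
      rw [hSdef]
      refine Finset.sum_le_sum fun i _ => ?_
      exact Finset.single_le_sum (fun j _ => sq_nonneg (A t i j)) (Finset.mem_univ i)
    have hT : T = ∑ i : Fin d, A t i i := rfl
    rw [hT]
    calc (∑ i : Fin d, A t i i) ^ 2 ≤ (Finset.univ.card : ℝ) * ∑ i : Fin d, (A t i i) ^ 2 := h1
      _ = (d:ℝ) * ∑ i : Fin d, (A t i i) ^ 2 := by simp
      _ ≤ (d:ℝ) * S := by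
          exact mul_le_mul_of_nonneg_left h2 (le_of_lt hdpos)
  -- first derivative of ρ on I
  have key : ∀ u ∈ I, HasDerivAt (fun v => q v * δ v ^ c)
      (deriv q u * δ u ^ c + q u * (deriv δ u * c * δ u ^ (c - 1))) u := by
    intro u hu
    exact (hqdiff u hu).1.hasDerivAt.mul
      ((hδdiff u hu).1.hasDerivAt.rpow_const (Or.inl (hδpos u hu).ne'))
  have hev : (deriv (fun v => q v * δ v ^ c)) =ᶠ[nhds t]
      (fun u => deriv q u * δ u ^ c + q u * (deriv δ u * c * δ u ^ (c - 1))) := by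
    filter_upwards [hIopen.mem_nhds ht] with u hu
    exact (key u hu).deriv
  -- second derivative
  have hF : HasDerivAt
      (fun u => deriv q u * δ u ^ c + q u * (deriv δ u * c * δ u ^ (c - 1)))
      (deriv (deriv q) t * δ t ^ c
        + deriv q t * (deriv δ t * c * δ t ^ (c - 1))
        + (deriv q t * (deriv δ t * c * δ t ^ (c - 1))
          + q t * ((deriv (deriv δ) t * c) * δ t ^ (c - 1)
            + (deriv δ t * c) * (deriv δ t * (c - 1) * δ t ^ (c - 1 - 1))))) t := by
    have hq1 : HasDerivAt q (deriv q t) t := (hqdiff t ht).1.hasDerivAt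
    have hq2 : HasDerivAt (deriv q) (deriv (deriv q) t) t := (hqdiff t ht).2.hasDerivAt
    have hδ1 : HasDerivAt δ (deriv δ t) t := (hδdiff t ht).1.hasDerivAt
    have hδ2 : HasDerivAt (deriv δ) (deriv (deriv δ) t) t := (hδdiff t ht).2.hasDerivAt
    have hcpow : HasDerivAt (fun u => δ u ^ c) (deriv δ t * c * δ t ^ (c - 1)) t :=
      hδ1.rpow_const (Or.inl hD.ne')
    have hc1pow : HasDerivAt (fun u => δ u ^ (c - 1))
        (deriv δ t * (c - 1) * δ t ^ (c - 1 - 1)) t :=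
      hδ1.rpow_const (Or.inl hD.ne')
    have hinner : HasDerivAt (fun u => deriv δ u * c * δ u ^ (c - 1))
        ((deriv (deriv δ) t * c) * δ t ^ (c - 1)
          + (deriv δ t * c) * (deriv δ t * (c - 1) * δ t ^ (c - 1 - 1))) t :=
      (hδ2.mul_const c).mul hc1pow
    exact (hq2.mul hcpow).add (hq1.mul hinner)
  have hEq : deriv (deriv (fun u => q u * δ u ^ c)) t
      = deriv (deriv q) t * δ t ^ c
        + deriv q t * (deriv δ t * c * δ t ^ (c - 1))
        + (deriv q t * (deriv δ t * c * δ t ^ (c - 1))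
          + q t * ((deriv (deriv δ) t * c) * δ t ^ (c - 1)
            + (deriv δ t * c) * (deriv δ t * (c - 1) * δ t ^ (c - 1 - 1)))) := by
    rw [hev.deriv_eq]
    exact hF.deriv
  rw [hq' t ht, hq'' t ht, hδ' t ht, hδ'' t ht] at hEq
  have e2 : δ t ^ (c - 1 - 1) = δ t ^ (c - 1) / δ t := Real.rpow_sub_one hD.ne' _
  have e1 : δ t ^ (c - 1) = δ t ^ c / δ t := Real.rpow_sub_one hD.ne' _
  rw [e2, e1] at hEq
  have hmain : deriv (deriv (fun u => q u * δ u ^ c)) t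
      = q t * δ t ^ c * (G * (1 - 4 * c) + c ^ 2 * T ^ 2 - c * S) := by
    rw [hEq]
    field_simp
    ring
  have hγ : deriv (deriv q) t / q t = G := by
    rw [hq'' t ht]; field_simp; exact hGdef.symm
  refine ⟨by rw [hγ]; exact hG0, ?_, ?_⟩
  · rw [hmain, hγ, mul_div_cancel_left₀ _ (ne_of_gt (mul_pos hQ hP))]
    have h4c : 4 / (d:ℝ) = 4 * c := by rw [hcdef]; ring
    rw [h4c]
    have hkey : c ^ 2 * T ^ 2 ≤ c * S := by
      have h := mul_le_mul_of_nonneg_left hCS (le_of_lt (mul_pos hc0 hc0))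
      calc c ^ 2 * T ^ 2 = c * c * T ^ 2 := by ring
        _ ≤ c * c * ((d:ℝ) * S) := h
        _ = (c * (d:ℝ)) * (c * S) := by ring
        _ = c * S := by rw [hcd]; ring
    linarith
  · intro hd1
    subst hd1
    have hc1 : c = 1 := by rw [hcdef]; norm_num
    have hTS : T ^ 2 = S := by
      rw [hTdef, hSdef]
      simp [Matrix.trace, Matrix.diag, Fin.sum_univ_one]
    rw [hmain, hγ, mul_div_cancel_left₀ _ (ne_of_gt (mul_pos hQ hP)), hTS, hc1]
    norm_num
    ring
end
end

section
/- Assume N_E is convex on (0,∞)² and, for every γ > 0, the map ρ ↦ (d−1) N_E(ρ, γ) is nonincreasing on (0,∞). Let I ⊆ ℝ be an open interval and let ρ, γ : I → (0,∞) be twice differentiable with γ(t)^{d+2}/ρ(t)^d in the interior of D(E) for all t ∈ I. Suppose γ'' ≥ 0 on I and, if d ≥ 2, ρ''/ρ ≤ (1 − 4/d²) γ''/γ on I, while if d = 1, ρ''/ρ = (1 − 4/d²) γ''/γ on I. Then the function e(t) := N_E(ρ(t), γ(t)) satisfies e''(t) ≥ 0 for all t ∈ I; in particular, e is convex on I. 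-/
noncomputable section

open scoped Classical

set_option maxHeartbeats 4000000

def NE1expr (d : ℕ) (Ec E1 r g r1 g1 : ℝ) : ℝ :=
  (r/g)^d * ((d:ℝ) * (r1/r - g1/g) * Ec
    + (g^(d+2)/r^d) * E1 * (((d:ℝ)+2) * (g1/g) - (d:ℝ) * (r1/r)))

/-- quadratic form in x,y -/
def Qquad (d Ec e1 e2 x y : ℝ) : ℝ :=
  Ec * (d^2*(x-y)^2 - d*(x^2 - y^2))
  + e1 * (2*d*(x-y)*((d+2)*y - d*x) - ((d+2)*y^2 - d*x^2))
  + (e1+e2)*((d+2)*y - d*x)^2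

/-- second derivative expression -/
def NE2expr (d : ℕ) (Ec E1 E2 r g r1 g1 r2 g2 : ℝ) : ℝ :=
  (r/g)^d * (Qquad (d:ℝ) Ec ((g^(d+2)/r^d)*E1) ((g^(d+2)/r^d)^2*E2) (r1/r) (g1/g)
    + (d:ℝ)*(Ec - (g^(d+2)/r^d)*E1)*(r2/r)
    + (((d:ℝ)+2)*((g^(d+2)/r^d)*E1) - (d:ℝ)*Ec)*(g2/g))

lemma hasDerivAt_NE (d : ℕ) (hd : 1 ≤ d) (Ef : ℝ → ℝ) {ρ γ : ℝ → ℝ} {t r1 g1 E1 : ℝ}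
    (hρ : HasDerivAt ρ r1 t) (hγ : HasDerivAt γ g1 t)
    (hr : ρ t ≠ 0) (hg : γ t ≠ 0)
    (hE : HasDerivAt Ef E1 (γ t ^ (d+2) / ρ t ^ d)) :
    HasDerivAt (fun u => NEreal d Ef (ρ u) (γ u))
      (NE1expr d (Ef (γ t ^ (d+2) / ρ t ^ d)) E1 (ρ t) (γ t) r1 g1) t := by
  obtain ⟨k, rfl⟩ : ∃ k, d = k + 1 := ⟨d - 1, (Nat.succ_pred_eq_of_pos hd).symm⟩
  have hc : HasDerivAt (fun u => γ u ^ (k+1+2) / ρ u ^ (k+1))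
      ((((k+1+2:ℕ):ℝ) * γ t ^ (k+1+2-1) * g1 * ρ t ^ (k+1)
        - γ t ^ (k+1+2) * (((k+1:ℕ):ℝ) * ρ t ^ (k+1-1) * r1)) / (ρ t ^ (k+1))^2) t :=
    (hγ.pow _).div (hρ.pow _) (pow_ne_zero _ hr)
  have hEc : HasDerivAt (fun u => Ef (γ u ^ (k+1+2) / ρ u ^ (k+1))) (E1 * _) t :=
    HasDerivAt.comp t hE hc
  have h1 : HasDerivAt (fun u => (ρ u / γ u)^(k+1))
      (((k+1:ℕ):ℝ) * (ρ t / γ t)^(k+1-1) * ((r1 * γ t - ρ t * g1)/ γ t ^ 2)) t :=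
    (hρ.div hγ hg).pow _
  have h2 := h1.mul hEc
  have h3 : HasDerivAt (fun u => NEreal (k+1) Ef (ρ u) (γ u)) _ t := h2
  convert h3 using 1
  simp only [NE1expr, show k+1+2-1 = k+2 from rfl, show k+1-1 = k from rfl]
  push_cast
  generalize Ef (γ t ^ (k+1+2) / ρ t ^ (k+1)) = A
  simp only [pow_succ]
  have hP : γ t ^ k ≠ 0 := pow_ne_zero _ hg
  have hQ : ρ t ^ k ≠ 0 := pow_ne_zero _ hr
  generalize γ t ^ k = P at hP ⊢
  generalize ρ t ^ k = Q at hQ ⊢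
  field_simp

lemma hasDerivAt_deriv_NE (d : ℕ) (hd : 1 ≤ d) {Ω : Set ℝ} (hΩ : IsOpen Ω) {Ef : ℝ → ℝ}
    (hC2 : ContDiffOn ℝ 2 Ef Ω)
    {ρ γ : ℝ → ℝ} {U : Set ℝ} (hU : IsOpen U) {t : ℝ} (ht : t ∈ U)
    (hρpos : ∀ u ∈ U, 0 < ρ u) (hγpos : ∀ u ∈ U, 0 < γ u)
    (hc : ∀ u ∈ U, γ u ^ (d+2) / ρ u ^ d ∈ Ω)
    (hρd : ∀ u ∈ U, DifferentiableAt ℝ ρ u) (hγd : ∀ u ∈ U, DifferentiableAt ℝ γ u)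
    (hρ2 : DifferentiableAt ℝ (deriv ρ) t) (hγ2 : DifferentiableAt ℝ (deriv γ) t) :
    HasDerivAt (deriv (fun u => NEreal d Ef (ρ u) (γ u)))
      (NE2expr d (Ef (γ t ^ (d+2) / ρ t ^ d)) (deriv Ef (γ t ^ (d+2) / ρ t ^ d))
        (deriv (deriv Ef) (γ t ^ (d+2) / ρ t ^ d))
        (ρ t) (γ t) (deriv ρ t) (deriv γ t) (deriv (deriv ρ) t) (deriv (deriv γ) t)) t := by
  have hEd : ∀ c ∈ Ω, HasDerivAt Ef (deriv Ef c) c := fun c hcm =>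
    ((hC2.differentiableOn two_ne_zero).differentiableAt (hΩ.mem_nhds hcm)).hasDerivAt
  have hC1 : ContDiffOn ℝ 1 (deriv Ef) Ω := hC2.deriv_of_isOpen hΩ (by norm_num)
  have hEd2 : ∀ c ∈ Ω, HasDerivAt (deriv Ef) (deriv (deriv Ef) c) c := fun c hcm =>
    ((hC1.differentiableOn one_ne_zero).differentiableAt (hΩ.mem_nhds hcm)).hasDerivAt
  -- deriv F agrees with G on U
  have hGeq : ∀ u ∈ U, deriv (fun u => NEreal d Ef (ρ u) (γ u)) u
      = NE1expr d (Ef (γ u ^ (d+2) / ρ u ^ d)) (deriv Ef (γ u ^ (d+2) / ρ u ^ d))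
          (ρ u) (γ u) (deriv ρ u) (deriv γ u) := by
    intro u hu
    exact (hasDerivAt_NE d hd Ef ((hρd u hu).hasDerivAt) ((hγd u hu).hasDerivAt)
      (ne_of_gt (hρpos u hu)) (ne_of_gt (hγpos u hu)) (hEd _ (hc u hu))).deriv
  have hev : deriv (fun u => NEreal d Ef (ρ u) (γ u)) =ᶠ[nhds t]
      (fun u => NE1expr d (Ef (γ u ^ (d+2) / ρ u ^ d)) (deriv Ef (γ u ^ (d+2)/ ρ u ^ d))
          (ρ u) (γ u) (deriv ρ u) (deriv γ u)) :=
    Filter.eventuallyEq_of_mem (hU.mem_nhds ht) hGeq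
  -- now compute the derivative of G at t
  set r1 := deriv ρ t; set g1 := deriv γ t
  have hρ : HasDerivAt ρ r1 t := (hρd t ht).hasDerivAt
  have hγ : HasDerivAt γ g1 t := (hγd t ht).hasDerivAt
  have hρ' : HasDerivAt (deriv ρ) (deriv (deriv ρ) t) t := hρ2.hasDerivAt
  have hγ' : HasDerivAt (deriv γ) (deriv (deriv γ) t) t := hγ2.hasDerivAt
  have hr : ρ t ≠ 0 := ne_of_gt (hρpos t ht)
  have hg : γ t ≠ 0 := ne_of_gt (hγpos t ht)
  obtain ⟨k, hdk⟩ : ∃ k, d = k + 1 := ⟨d - 1, (Nat.succ_pred_eq_of_pos hd).symm⟩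
  subst hdk
  have hcD : HasDerivAt (fun u => γ u ^ (k+1+2) / ρ u ^ (k+1))
      ((((k+1+2:ℕ):ℝ) * γ t ^ (k+1+2-1) * g1 * ρ t ^ (k+1)
        - γ t ^ (k+1+2) * (((k+1:ℕ):ℝ) * ρ t ^ (k+1-1) * r1)) / (ρ t ^ (k+1))^2) t :=
    (hγ.pow _).div (hρ.pow _) (pow_ne_zero _ hr)
  have hEc : HasDerivAt (fun u => Ef (γ u ^ (k+1+2) / ρ u ^ (k+1)))
      (deriv Ef (γ t ^ (k+1+2) / ρ t ^ (k+1)) * _) t :=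
    HasDerivAt.comp t (hEd _ (hc t ht)) hcD
  have hE1c : HasDerivAt (fun u => deriv Ef (γ u ^ (k+1+2) / ρ u ^ (k+1)))
      (deriv (deriv Ef) (γ t ^ (k+1+2) / ρ t ^ (k+1)) * _) t :=
    HasDerivAt.comp t (hEd2 _ (hc t ht)) hcD
  have hA : HasDerivAt (fun u => (ρ u / γ u)^(k+1))
      (((k+1:ℕ):ℝ) * (ρ t / γ t)^(k+1-1) * ((r1 * γ t - ρ t * g1)/ γ t ^ 2)) t :=
    (hρ.div hγ hg).pow _
  have hB1 : HasDerivAt (fun u => ((k+1:ℕ):ℝ) * (deriv ρ u / ρ u - deriv γ u / γ u)) _ t :=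
    ((hρ'.div hρ hr).sub (hγ'.div hγ hg)).const_mul _
  have hB : HasDerivAt (fun u => ((k+1:ℕ):ℝ) * (deriv ρ u / ρ u - deriv γ u / γ u)
      * Ef (γ u ^ (k+1+2) / ρ u ^ (k+1))) _ t := hB1.mul hEc
  have hC1' : HasDerivAt (fun u => (γ u ^ (k+1+2) / ρ u ^ (k+1))
      * deriv Ef (γ u ^ (k+1+2) / ρ u ^ (k+1))) _ t := hcD.mul hE1c
  have hC2' : HasDerivAt (fun u => (((k+1:ℕ):ℝ)+2) * (deriv γ u / γ u)
      - ((k+1:ℕ):ℝ) * (deriv ρ u / ρ u)) _ t :=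
    ((hγ'.div hγ hg).const_mul _).sub ((hρ'.div hρ hr).const_mul _)
  have hG : HasDerivAt (fun u => NE1expr (k+1) (Ef (γ u ^ (k+1+2) / ρ u ^ (k+1)))
      (deriv Ef (γ u ^ (k+1+2) / ρ u ^ (k+1))) (ρ u) (γ u) (deriv ρ u) (deriv γ u)) _ t :=
    hA.mul (hB.add (hC1'.mul hC2'))
  have hD := hG.congr_of_eventuallyEq hev
  refine hD.congr_deriv ?_
  symm
  simp only [NE2expr, Qquad, show k+1+2-1 = k+2 from rfl, show k+1-1 = k from rfl]
  push_cast
  generalize Ef (γ t ^ (k+1+2) / ρ t ^ (k+1)) = A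
  generalize deriv Ef (γ t ^ (k+1+2) / ρ t ^ (k+1)) = B
  generalize deriv (deriv Ef) (γ t ^ (k+1+2) / ρ t ^ (k+1)) = C
  simp only [pow_succ]
  have hP : γ t ^ k ≠ 0 := pow_ne_zero _ hg
  have hQ : ρ t ^ k ≠ 0 := pow_ne_zero _ hr
  generalize γ t ^ k = P at hP ⊢
  generalize ρ t ^ k = Q at hQ ⊢
  field_simp
  ring

lemma rep_NE (d : ℕ) (Efun : ℝ → EReal) (Ef : ℝ → ℝ) {Ω : Set ℝ}
    (hrep : ∀ c ∈ Ω, Efun c = ((Ef c : ℝ) : EReal)) {r g : ℝ}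
    (hc : g ^ (d+2) / r ^ d ∈ Ω) :
    NEfun d Efun r g = ((NEreal d Ef r g : ℝ) : EReal) := by
  simp only [NEfun, NEreal, hrep _ hc, ← EReal.coe_mul]

lemma monoOn_deriv_nonneg {f : ℝ → ℝ} {s : Set ℝ} {x f' : ℝ}
    (hs : s ∈ nhds x) (hm : MonotoneOn f s) (hd : HasDerivAt f f' x) : 0 ≤ f' := by
  have h1 : Filter.Tendsto (slope f x) (nhdsWithin x (Set.Ioi x)) (nhds f') :=
    (hasDerivAt_iff_tendsto_slope.1 hd).mono_left
      (nhdsWithin_mono x fun y hy => ne_of_gt hy)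
  refine ge_of_tendsto h1 ?_
  filter_upwards [self_mem_nhdsWithin, mem_nhdsWithin_of_mem_nhds hs] with y hy hys
  have hxs : x ∈ s := mem_of_mem_nhds hs
  have hfy : f x ≤ f y := hm hxs hys (le_of_lt hy)
  have hxy : (0:ℝ) ≤ y - x := sub_nonneg.2 (le_of_lt hy)
  simp only [slope_def_field]
  rw [div_eq_mul_inv]
  exact mul_nonneg (sub_nonneg.2 hfy) (inv_nonneg.2 hxy)

lemma antiOn_deriv_nonpos {f : ℝ → ℝ} {s : Set ℝ} {x f' : ℝ}
    (hs : s ∈ nhds x) (hm : AntitoneOn f s) (hd : HasDerivAt f f' x) : f' ≤ 0 := by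
  have := monoOn_deriv_nonneg hs hm.neg hd.neg
  linarith

lemma Qquad_special {d Ec e1 e2 : ℝ} (hd : d ≠ 0) :
    Qquad d Ec e1 e2 (1+2/d) 1 = 2*e1 + 4/d*(e1 - Ec) := by
  simp only [Qquad]; field_simp; ring

lemma Qquad_nonneg (d : ℕ) (hd : 1 ≤ d) (Efun : ℝ → EReal) (Ef : ℝ → ℝ) {Ω : Set ℝ}
    (hΩ : IsOpen Ω) (hrep : ∀ c ∈ Ω, Efun c = ((Ef c : ℝ) : EReal))
    (hC2 : ContDiffOn ℝ 2 Ef Ω)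
    (hNconv : ∀ ρ₁ γ₁ ρ₂ γ₂ t : ℝ, 0 < ρ₁ → 0 < γ₁ → 0 < ρ₂ → 0 < γ₂ → 0 ≤ t → t ≤ 1 →
      NEfun d Efun (t * ρ₁ + (1 - t) * ρ₂) (t * γ₁ + (1 - t) * γ₂) ≤
        (t : EReal) * NEfun d Efun ρ₁ γ₁ + ((1 - t : ℝ) : EReal) * NEfun d Efun ρ₂ γ₂)
    {r g : ℝ} (hr : 0 < r) (hg : 0 < g) (hc : g ^ (d+2) / r ^ d ∈ Ω) (x y : ℝ) :
    0 ≤ Qquad (d:ℝ) (Ef (g ^ (d+2) / r ^ d))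
      ((g ^ (d+2) / r ^ d) * deriv Ef (g ^ (d+2) / r ^ d))
      ((g ^ (d+2) / r ^ d)^2 * deriv (deriv Ef) (g ^ (d+2) / r ^ d)) x y := by
  classical
  set ρl : ℝ → ℝ := fun s => r + s*(x*r) with hρl
  set γl : ℝ → ℝ := fun s => g + s*(y*g) with hγl
  have hρc : Continuous ρl := by fun_prop
  have hγc : Continuous γl := by fun_prop
  have hρl0 : ρl 0 = r := by simp [hρl]
  have hγl0 : γl 0 = g := by simp [hγl]
  have hev : ∀ᶠ s in nhds (0:ℝ), 0 < ρl s ∧ 0 < γl s ∧ γl s ^ (d+2) / ρl s ^ d ∈ Ω := by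
    have e1 : ∀ᶠ s in nhds (0:ℝ), 0 < ρl s := by
      have := hρc.continuousAt (x := (0:ℝ))
      have h := this.eventually_mem (s := Set.Ioi (0:ℝ)) (by rw [hρl0]; exact isOpen_Ioi.mem_nhds hr)
      simpa using h
    have e2 : ∀ᶠ s in nhds (0:ℝ), 0 < γl s := by
      have := hγc.continuousAt (x := (0:ℝ))
      have h := this.eventually_mem (s := Set.Ioi (0:ℝ)) (by rw [hγl0]; exact isOpen_Ioi.mem_nhds hg)
      simpa using h
    have e3 : ∀ᶠ s in nhds (0:ℝ), γl s ^ (d+2) / ρl s ^ d ∈ Ω := by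
      have hca : ContinuousAt (fun s => γl s ^ (d+2) / ρl s ^ d) 0 := by
        apply ContinuousAt.div
        · fun_prop
        · fun_prop
        · rw [hρl0]; exact pow_ne_zero _ (ne_of_gt hr)
      have h := hca.eventually_mem (s := Ω) (by rw [hρl0, hγl0]; exact hΩ.mem_nhds hc)
      simpa using h
    filter_upwards [e1, e2, e3] with s h1 h2 h3 using ⟨h1, h2, h3⟩
  obtain ⟨ε, hε, hball⟩ := Metric.eventually_nhds_iff_ball.1 hev
  set S := Metric.ball (0:ℝ) ε with hS
  have hSnhds : S ∈ nhds (0:ℝ) := Metric.ball_mem_nhds 0 hε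
  have hρder : ∀ s : ℝ, HasDerivAt ρl (x*r) s := by
    intro s
    simpa [hρl] using ((hasDerivAt_id s).mul_const (x*r)).const_add r
  have hγder : ∀ s : ℝ, HasDerivAt γl (y*g) s := by
    intro s
    simpa [hγl] using ((hasDerivAt_id s).mul_const (y*g)).const_add g
  have hEd : ∀ c ∈ Ω, HasDerivAt Ef (deriv Ef c) c := fun c hcm =>
    ((hC2.differentiableOn two_ne_zero).differentiableAt (hΩ.mem_nhds hcm)).hasDerivAt
  -- convexity of the restricted function
  have hconvg : ConvexOn ℝ S (fun s => NEreal d Ef (ρl s) (γl s)) := by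
    refine ⟨convex_ball _ _, ?_⟩
    intro s₁ hs₁ s₂ hs₂ a b ha hb hab
    have hmid : a • s₁ + b • s₂ ∈ S := (convex_ball (0:ℝ) ε) hs₁ hs₂ ha hb hab
    obtain ⟨h1, h2, h3⟩ := hball _ hs₁
    obtain ⟨h1', h2', h3'⟩ := hball _ hs₂
    obtain ⟨hm1, hm2, hm3⟩ := hball _ hmid
    have hb' : (1:ℝ) - a = b := by linarith
    have key := hNconv (ρl s₁) (γl s₁) (ρl s₂) (γl s₂) a h1 h2 h1' h2' ha (by linarith)
    have hρa : a * ρl s₁ + (1-a) * ρl s₂ = ρl (a • s₁ + b • s₂) := by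
      simp only [hρl, smul_eq_mul, hb']
      calc a * (r + s₁*(x*r)) + b * (r + s₂*(x*r))
          = (a+b)*r + (a*s₁ + b*s₂)*(x*r) := by ring
        _ = r + (a*s₁+b*s₂)*(x*r) := by rw [hab]; ring
    have hγa : a * γl s₁ + (1-a) * γl s₂ = γl (a • s₁ + b • s₂) := by
      simp only [hγl, smul_eq_mul, hb']
      calc a * (g + s₁*(y*g)) + b * (g + s₂*(y*g))
          = (a+b)*g + (a*s₁ + b*s₂)*(y*g) := by ring
        _ = g + (a*s₁+b*s₂)*(y*g) := by rw [hab]; ring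
    rw [hρa, hγa] at key
    rw [rep_NE d Efun Ef hrep h3, rep_NE d Efun Ef hrep h3', rep_NE d Efun Ef hrep hm3] at key
    rw [← EReal.coe_mul, ← EReal.coe_mul, ← EReal.coe_add, EReal.coe_le_coe_iff] at key
    simpa [smul_eq_mul, hb'] using key
  have hdiffS : ∀ s ∈ S, DifferentiableAt ℝ (fun s => NEreal d Ef (ρl s) (γl s)) s := by
    intro s hs
    obtain ⟨h1, h2, h3⟩ := hball _ hs
    exact (hasDerivAt_NE d hd Ef (hρder s) (hγder s) (ne_of_gt h1) (ne_of_gt h2)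
      (hEd _ h3)).differentiableAt
  have hmono := hconvg.monotoneOn_deriv hdiffS
  -- derivative data for second derivative
  have hρderiv : deriv ρl = fun _ => x*r := funext fun s => (hρder s).deriv
  have hγderiv : deriv γl = fun _ => y*g := funext fun s => (hγder s).deriv
  have hdc1 : DifferentiableAt ℝ (deriv ρl) (0:ℝ) := by
    rw [hρderiv]; exact differentiableAt_const _
  have hdc2 : DifferentiableAt ℝ (deriv γl) (0:ℝ) := by
    rw [hγderiv]; exact differentiableAt_const _
  have h2nd := hasDerivAt_deriv_NE d hd hΩ hC2 (Metric.isOpen_ball) (Metric.mem_ball_self hε)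
    (fun u hu => (hball _ hu).1) (fun u hu => (hball _ hu).2.1) (fun u hu => (hball _ hu).2.2)
    (fun u hu => (hρder u).differentiableAt) (fun u hu => (hγder u).differentiableAt)
    hdc1 hdc2
  have hval : 0 ≤ NE2expr d (Ef (γl 0 ^ (d+2) / ρl 0 ^ d)) (deriv Ef (γl 0 ^ (d+2) / ρl 0 ^ d))
      (deriv (deriv Ef) (γl 0 ^ (d+2) / ρl 0 ^ d)) (ρl 0) (γl 0) (deriv ρl 0) (deriv γl 0)
      (deriv (deriv ρl) 0) (deriv (deriv γl) 0) :=
    monoOn_deriv_nonneg hSnhds hmono h2nd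
  rw [hρl0, hγl0, hρderiv, hγderiv] at hval
  simp only [NE2expr, deriv_const', zero_div, mul_zero, add_zero] at hval
  have hP : (0:ℝ) < (r/g)^d := pow_pos (div_pos hr hg) d
  rw [mul_nonneg_iff_of_pos_left hP] at hval
  have hxr : x*r/r = x := by field_simp
  have hyg : y*g/g = y := by field_simp
  rw [hxr, hyg] at hval
  exact hval

lemma eps_mono (d : ℕ) (hd2 : 2 ≤ d) (Efun : ℝ → EReal) (Ef : ℝ → ℝ) {Ω : Set ℝ}
    (hΩ : IsOpen Ω) (hrep : ∀ c ∈ Ω, Efun c = ((Ef c : ℝ) : EReal))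
    (hC2 : ContDiffOn ℝ 2 Ef Ω)
    (hNmono : ∀ γ ρ₁ ρ₂ : ℝ, 0 < γ → 0 < ρ₁ → ρ₁ ≤ ρ₂ →
      (((d : ℝ) - 1 : ℝ) : EReal) * NEfun d Efun ρ₂ γ ≤
        (((d : ℝ) - 1 : ℝ) : EReal) * NEfun d Efun ρ₁ γ)
    {r g : ℝ} (hr : 0 < r) (hg : 0 < g) (hc : g ^ (d+2) / r ^ d ∈ Ω) :
    Ef (g ^ (d+2) / r ^ d) ≤ (g ^ (d+2) / r ^ d) * deriv Ef (g ^ (d+2) / r ^ d) := by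
  classical
  have hd : 1 ≤ d := le_trans one_le_two hd2
  set ρl : ℝ → ℝ := fun s => r + s with hρl
  have hρl0 : ρl 0 = r := by simp [hρl]
  have hev : ∀ᶠ s in nhds (0:ℝ), 0 < ρl s ∧ g ^ (d+2) / ρl s ^ d ∈ Ω := by
    have e1 : ∀ᶠ s in nhds (0:ℝ), 0 < ρl s := by
      have hca : ContinuousAt ρl 0 := by fun_prop
      have h := hca.eventually_mem (s := Set.Ioi (0:ℝ)) (by rw [hρl0]; exact isOpen_Ioi.mem_nhds hr)
      simpa using h
    have e3 : ∀ᶠ s in nhds (0:ℝ), g ^ (d+2) / ρl s ^ d ∈ Ω := by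
      have hca : ContinuousAt (fun s => g ^ (d+2) / ρl s ^ d) 0 := by
        apply ContinuousAt.div
        · fun_prop
        · fun_prop
        · rw [hρl0]; exact pow_ne_zero _ (ne_of_gt hr)
      have h := hca.eventually_mem (s := Ω) (by rw [hρl0]; exact hΩ.mem_nhds hc)
      simpa using h
    filter_upwards [e1, e3] with s h1 h3 using ⟨h1, h3⟩
  obtain ⟨ε, hε, hball⟩ := Metric.eventually_nhds_iff_ball.1 hev
  have hSnhds : Metric.ball (0:ℝ) ε ∈ nhds (0:ℝ) := Metric.ball_mem_nhds 0 hε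
  have hdpos : (0:ℝ) < (d:ℝ) - 1 := by
    have : (2:ℝ) ≤ (d:ℝ) := by exact_mod_cast hd2
    linarith
  have hanti : AntitoneOn (fun s => NEreal d Ef (ρl s) g) (Metric.ball (0:ℝ) ε) := by
    intro s₁ hs₁ s₂ hs₂ h12
    obtain ⟨h1, h3⟩ := hball _ hs₁
    obtain ⟨h1', h3'⟩ := hball _ hs₂
    have key := hNmono g (ρl s₁) (ρl s₂) hg h1 (by simp [hρl]; linarith)
    rw [rep_NE d Efun Ef hrep h3, rep_NE d Efun Ef hrep h3'] at key
    rw [← EReal.coe_mul, ← EReal.coe_mul, EReal.coe_le_coe_iff] at key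
    exact le_of_mul_le_mul_left (by simpa [mul_comm] using key) hdpos
  have hρder : ∀ s : ℝ, HasDerivAt ρl 1 s := fun s => by
    simpa using (hasDerivAt_id s).const_add r
  have hEd : HasDerivAt Ef (deriv Ef (g ^ (d+2) / r ^ d)) (g ^ (d+2) / r ^ d) :=
    ((hC2.differentiableOn two_ne_zero).differentiableAt (hΩ.mem_nhds hc)).hasDerivAt
  have hder : HasDerivAt (fun s => NEreal d Ef (ρl s) g)
      (NE1expr d (Ef (g ^ (d+2) / r ^ d)) (deriv Ef (g ^ (d+2) / r ^ d)) r g 1 0) 0 := by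
    have := hasDerivAt_NE d hd Ef (ρ := ρl) (γ := fun _ => g) (t := 0)
      (hρder 0) (hasDerivAt_const 0 g) (by rw [hρl0]; exact ne_of_gt hr) (ne_of_gt hg)
      (by rw [hρl0]; exact hEd)
    simpa only [hρl0] using this
  have hle := antiOn_deriv_nonpos hSnhds hanti hder
  simp only [NE1expr, zero_div, mul_zero, zero_sub, sub_zero, mul_one] at hle
  -- hle : (r/g)^d * (d * (1/r) * Ef c + c * E1 * (-(d * (1/r)))) ≤ 0
  have hP : (0:ℝ) < (r/g)^d * ((d:ℝ) * (1/r)) := by positivity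
  by_contra hcon
  push_neg at hcon
  have hgt : 0 < (r/g)^d * ((d:ℝ) * (1/r) * Ef (g ^ (d+2) / r ^ d)
      + g ^ (d+2) / r ^ d * deriv Ef (g ^ (d+2) / r ^ d) * (-((d:ℝ) * (1/r)))) := by
    have heq : (r/g)^d * ((d:ℝ) * (1/r) * Ef (g ^ (d+2) / r ^ d)
        + g ^ (d+2) / r ^ d * deriv Ef (g ^ (d+2) / r ^ d) * (-((d:ℝ) * (1/r))))
        = ((r/g)^d * ((d:ℝ) * (1/r))) * (Ef (g ^ (d+2) / r ^ d)
          - g ^ (d+2) / r ^ d * deriv Ef (g ^ (d+2) / r ^ d)) := by ring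
    rw [heq]
    exact mul_pos hP (sub_pos.2 hcon)
  linarith [hle, hgt]


theorem statement_18 (d : ℕ) (hd : 1 ≤ d)
    (Efun : ℝ → EReal)
    (hbot : ∀ c, Efun c ≠ ⊥)
    (hE0 : Efun 0 = 0)
    (hlsc : LowerSemicontinuousOn Efun (Set.Ici 0))
    (hconvE : ∀ c₁ ∈ Set.Ici (0 : ℝ), ∀ c₂ ∈ Set.Ici (0 : ℝ), ∀ t ∈ Set.Icc (0 : ℝ) 1,
      Efun (t * c₁ + (1 - t) * c₂) ≤
        (t : EReal) * Efun c₁ + ((1 - t : ℝ) : EReal) * Efun c₂)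
    (hfin : ∃ c₀ > (0 : ℝ), Efun c₀ ≠ ⊤)
    (Ef : ℝ → ℝ)
    (hrep : ∀ c ∈ interior {c : ℝ | 0 ≤ c ∧ Efun c ≠ ⊤}, Efun c = ((Ef c : ℝ) : EReal))
    (hC2 : ContDiffOn ℝ 2 Ef (interior {c : ℝ | 0 ≤ c ∧ Efun c ≠ ⊤}))
    (hNconv : ∀ ρ₁ γ₁ ρ₂ γ₂ t : ℝ, 0 < ρ₁ → 0 < γ₁ → 0 < ρ₂ → 0 < γ₂ → 0 ≤ t → t ≤ 1 →
      NEfun d Efun (t * ρ₁ + (1 - t) * ρ₂) (t * γ₁ + (1 - t) * γ₂) ≤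
        (t : EReal) * NEfun d Efun ρ₁ γ₁ + ((1 - t : ℝ) : EReal) * NEfun d Efun ρ₂ γ₂)
    (hNmono : ∀ γ ρ₁ ρ₂ : ℝ, 0 < γ → 0 < ρ₁ → ρ₁ ≤ ρ₂ →
      (((d : ℝ) - 1 : ℝ) : EReal) * NEfun d Efun ρ₂ γ ≤
        (((d : ℝ) - 1 : ℝ) : EReal) * NEfun d Efun ρ₁ γ)
    (I : Set ℝ) (hIopen : IsOpen I) (hIconv : Convex ℝ I)
    (ρ γ : ℝ → ℝ)
    (hρpos : ∀ t ∈ I, 0 < ρ t) (hγpos : ∀ t ∈ I, 0 < γ t)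
    (hρdiff : ∀ t ∈ I, DifferentiableAt ℝ ρ t ∧ DifferentiableAt ℝ (deriv ρ) t)
    (hγdiff : ∀ t ∈ I, DifferentiableAt ℝ γ t ∧ DifferentiableAt ℝ (deriv γ) t)
    (hdom : ∀ t ∈ I, γ t ^ (d + 2) / ρ t ^ d ∈ interior {c : ℝ | 0 ≤ c ∧ Efun c ≠ ⊤})
    (hγ'' : ∀ t ∈ I, 0 ≤ deriv (deriv γ) t)
    (hcurv2 : 2 ≤ d → ∀ t ∈ I,
      deriv (deriv ρ) t / ρ t ≤ (1 - 4 / (d : ℝ) ^ 2) * (deriv (deriv γ) t / γ t))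
    (hcurv1 : d = 1 → ∀ t ∈ I,
      deriv (deriv ρ) t / ρ t = (1 - 4 / (d : ℝ) ^ 2) * (deriv (deriv γ) t / γ t)) :
    (∀ t ∈ I, 0 ≤ deriv (deriv (fun u => NEreal d Ef (ρ u) (γ u))) t) ∧
    ConvexOn ℝ I (fun u => NEreal d Ef (ρ u) (γ u)) := by
  have hΩ : IsOpen (interior {c : ℝ | 0 ≤ c ∧ Efun c ≠ ⊤}) := isOpen_interior
  have hdR : (0:ℝ) < (d:ℝ) := by exact_mod_cast Nat.pos_of_ne_zero (by omega)
  have hEd : ∀ c ∈ interior {c : ℝ | 0 ≤ c ∧ Efun c ≠ ⊤},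
      HasDerivAt Ef (deriv Ef c) c := fun c hcm =>
    ((hC2.differentiableOn two_ne_zero).differentiableAt (hΩ.mem_nhds hcm)).hasDerivAt
  have hkey : ∀ t ∈ I, HasDerivAt (deriv (fun u => NEreal d Ef (ρ u) (γ u)))
      (NE2expr d (Ef (γ t ^ (d+2) / ρ t ^ d)) (deriv Ef (γ t ^ (d+2) / ρ t ^ d))
        (deriv (deriv Ef) (γ t ^ (d+2) / ρ t ^ d)) (ρ t) (γ t)
        (deriv ρ t) (deriv γ t) (deriv (deriv ρ) t) (deriv (deriv γ) t)) t := fun t ht =>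
    hasDerivAt_deriv_NE d hd hΩ hC2 hIopen ht hρpos hγpos hdom
      (fun u hu => (hρdiff u hu).1) (fun u hu => (hγdiff u hu).1)
      (hρdiff t ht).2 (hγdiff t ht).2
  have hFd : ∀ t ∈ I, DifferentiableAt ℝ (fun u => NEreal d Ef (ρ u) (γ u)) t := by
    intro t ht
    exact (hasDerivAt_NE d hd Ef ((hρdiff t ht).1.hasDerivAt) ((hγdiff t ht).1.hasDerivAt)
      (ne_of_gt (hρpos t ht)) (ne_of_gt (hγpos t ht)) (hEd _ (hdom t ht))).differentiableAt
  have hpos2 : ∀ t ∈ I, 0 ≤ NE2expr d (Ef (γ t ^ (d+2) / ρ t ^ d))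
      (deriv Ef (γ t ^ (d+2) / ρ t ^ d)) (deriv (deriv Ef) (γ t ^ (d+2) / ρ t ^ d))
      (ρ t) (γ t) (deriv ρ t) (deriv γ t) (deriv (deriv ρ) t) (deriv (deriv γ) t) := by
    intro t ht
    have hr := hρpos t ht
    have hg := hγpos t ht
    have hQ1 := Qquad_nonneg d hd Efun Ef hΩ hrep hC2 hNconv hr hg (hdom t ht)
      (deriv ρ t / ρ t) (deriv γ t / γ t)
    have hR := Qquad_nonneg d hd Efun Ef hΩ hrep hC2 hNconv hr hg (hdom t ht)
      (1 + 2/(d:ℝ)) 1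
    rw [Qquad_special (ne_of_gt hdR)] at hR
    have hY : 0 ≤ deriv (deriv γ) t / γ t := div_nonneg (hγ'' t ht) hg.le
    set c := γ t ^ (d+2) / ρ t ^ d with hcdef
    set Ec := Ef c with hEcdef
    set e1 := c * deriv Ef c with he1def
    set e2 := c^2 * deriv (deriv Ef) c with he2def
    set xx := deriv ρ t / ρ t with hxxdef
    set yy := deriv γ t / γ t with hyydef
    set X := deriv (deriv ρ) t / ρ t with hXdef
    set Y := deriv (deriv γ) t / γ t with hYdef
    -- multiplied versions without division by d
    have hR' : 0 ≤ 2*e1*(d:ℝ) + 4*(e1 - Ec) := by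
      have h := mul_nonneg hdR.le hR
      have heq : (d:ℝ) * (2*e1 + 4/(d:ℝ)*(e1 - Ec)) = 2*e1*(d:ℝ) + 4*(e1 - Ec) := by
        field_simp
      rwa [heq] at h
    have h3 : 0 ≤ ((d:ℝ)*(e1 - Ec)) * (((d:ℝ)^2 - 4)*Y - (d:ℝ)^2*X) := by
      rcases eq_or_lt_of_le hd with hd1 | hd2'
    -- d = 1 : exact curvature equality makes the factor zero
      · have hX1 := hcurv1 hd1.symm t ht
        have : ((d:ℝ)^2 - 4)*Y - (d:ℝ)^2*X = 0 := by
          rw [hXdef, hYdef, hX1]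
          have hd1' : (d:ℝ) = 1 := by rw [← hd1]; norm_num
          rw [hd1']; ring
        rw [this, mul_zero]
      · have hd2 : 2 ≤ d := hd2'
        have hs := eps_mono d hd2 Efun Ef hΩ hrep hC2 hNmono hr hg (hdom t ht)
        have hX2 := hcurv2 hd2 t ht
        have hX' : (d:ℝ)^2*X ≤ ((d:ℝ)^2 - 4)*Y := by
          have h := mul_le_mul_of_nonneg_left hX2 (sq_nonneg (d:ℝ))
          have heq : (d:ℝ)^2 * ((1 - 4/(d:ℝ)^2) * Y) = ((d:ℝ)^2 - 4)*Y := by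
            field_simp
          rw [heq] at h
          exact h
        exact mul_nonneg (mul_nonneg hdR.le (sub_nonneg.2 hs)) (sub_nonneg.2 hX')
    simp only [NE2expr]
    refine mul_nonneg (le_of_lt (pow_pos (div_pos hr hg) d)) ?_
    simp only [← hcdef, ← hEcdef, ← he1def, ← he2def, ← hxxdef, ← hyydef, ← hXdef, ← hYdef]
    have h0 : 0 ≤ (d:ℝ)^2 * (Qquad (d:ℝ) Ec e1 e2 xx yy
        + (d:ℝ)*(Ec - e1)*X + (((d:ℝ)+2)*e1 - (d:ℝ)*Ec)*Y) := by
      have hid : (d:ℝ)^2 * (Qquad (d:ℝ) Ec e1 e2 xx yy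
          + (d:ℝ)*(Ec - e1)*X + (((d:ℝ)+2)*e1 - (d:ℝ)*Ec)*Y)
          = (d:ℝ)^2 * Qquad (d:ℝ) Ec e1 e2 xx yy
            + (d:ℝ)*(Y*(2*e1*(d:ℝ) + 4*(e1 - Ec)))
            + ((d:ℝ)*(e1 - Ec)) * (((d:ℝ)^2 - 4)*Y - (d:ℝ)^2*X) := by
        ring
      rw [hid]
      have := mul_nonneg hY hR'
      positivity
    exact (mul_nonneg_iff_of_pos_left (pow_pos hdR 2)).1 h0
  have part1 : ∀ t ∈ I, 0 ≤ deriv (deriv (fun u => NEreal d Ef (ρ u) (γ u))) t := by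
    intro t ht
    rw [(hkey t ht).deriv]
    exact hpos2 t ht
  refine ⟨part1, ?_⟩
  have hint : interior I = I := hIopen.interior_eq
  refine convexOn_of_hasDerivWithinAt2_nonneg hIconv
    (f' := deriv (fun u => NEreal d Ef (ρ u) (γ u)))
    (f'' := deriv (deriv (fun u => NEreal d Ef (ρ u) (γ u)))) ?_ ?_ ?_ ?_
  · exact fun t ht => ((hFd t ht).continuousAt).continuousWithinAt
  · intro x hx
    rw [hint] at hx ⊢
    exact ((hFd x hx).hasDerivAt).hasDerivWithinAt
  · intro x hx
    rw [hint] at hx ⊢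
    have h := hkey x hx
    rw [← h.deriv] at h
    exact h.hasDerivWithinAt
  · intro x hx
    rw [hint] at hx
    exact part1 x hx
end
end

section
/- Let d ≥ 1 be an integer, c* ≥ 0, let I ⊆ ℝ be an open interval, and let ρ, γ : I → (0,∞) be twice differentiable functions with γ'' ≥ 0 on I and ρ''/ρ ≤ (1 − 4/d) γ''/γ on I. Then the function c(t) := c* γ(t)^{d+2} / ρ(t)^d satisfies c''(t) ≥ 6 c(t) γ''(t)/γ(t) ≥ 0 for all t ∈ I; in particular, c is convex on I. -/
noncomputable section

lemma pow_deriv_aux (e : ℕ) (x x1 : ℝ) (hx : x ≠ 0) :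
    (e:ℝ) * x^(e-1) * x1 = (e:ℝ) * x^e * x1 / x := by
  cases e with
  | zero => simp
  | succ n =>
    rw [Nat.succ_sub_one, pow_succ]
    field_simp

lemma derivF_eq (d : ℕ) (c a a1 b b1 : ℝ) (hb : b ≠ 0) :
    c * ((d:ℝ)+2) * a ^ (d+1) * a1 / b ^ d -
      c * (d:ℝ) * a ^ (d+2) * b1 / b ^ (d+1) =
    (c * ((↑(d+2):ℝ) * a ^ (d+1) * a1) * b ^ d -
        c * a ^ (d+2) * ((d:ℝ) * b ^ d * b1 / b)) /
      (b ^ d) ^ 2 := by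
  have h4 : b ^ d ≠ 0 := pow_ne_zero _ hb
  have h5 : b ^ (d+1) ≠ 0 := pow_ne_zero _ hb
  push_cast
  field_simp
  ring

lemma derivG_eq (d : ℕ) (c a a1 a2 b b1 b2 : ℝ) (ha : a ≠ 0) (hb : b ≠ 0) :
    ((c*((d:ℝ)+2)*((↑(d+1):ℝ)*a^d*a1)*a1 + c*((d:ℝ)+2)*a^(d+1)*a2) * b^d
        - c*((d:ℝ)+2)*a^(d+1)*a1*((d:ℝ)*b^d*b1/b)) / (b^d)^2
      - ((c*(d:ℝ)*((↑(d+2):ℝ)*a^(d+1)*a1)*b1 + c*(d:ℝ)*a^(d+2)*b2) * b^(d+1)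
        - c*(d:ℝ)*a^(d+2)*b1*((↑(d+1):ℝ)*b^d*b1)) / (b^(d+1))^2
    = c * a^(d+2)/b^d *
        (((d:ℝ)+2)*(a2/a) + ((d:ℝ)+2)*((d:ℝ)+1)*(a1/a)^2
          - 2*(d:ℝ)*((d:ℝ)+2)*(a1/a)*(b1/b) + (d:ℝ)*((d:ℝ)+1)*(b1/b)^2 - (d:ℝ)*(b2/b)) := by
  have h4 : b ^ d ≠ 0 := pow_ne_zero _ hb
  have h5 : b ^ (d+1) ≠ 0 := pow_ne_zero _ hb
  have h6 : a ^ d ≠ 0 := pow_ne_zero _ ha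
  push_cast
  field_simp
  ring

lemma key_ineq (d : ℕ) (hd : 1 ≤ d) (c a a1 a2 b b1 b2 : ℝ)
    (hc : 0 ≤ c) (ha : 0 < a) (hb : 0 < b) (ha2 : 0 ≤ a2)
    (hcurv : b2/b ≤ (1 - 4/(d:ℝ))*(a2/a)) :
    6 * (c * a^(d+2)/b^d) * (a2/a) ≤
      c * a^(d+2)/b^d *
        (((d:ℝ)+2)*(a2/a) + ((d:ℝ)+2)*((d:ℝ)+1)*(a1/a)^2
          - 2*(d:ℝ)*((d:ℝ)+2)*(a1/a)*(b1/b) + (d:ℝ)*((d:ℝ)+1)*(b1/b)^2 - (d:ℝ)*(b2/b)) := by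
  have hC : 0 ≤ c * a^(d+2)/b^d := by positivity
  set x := a1/a
  set y := b1/b
  set X := a2/a with hX
  set Y := b2/b with hY
  have hdpos : (0:ℝ) < (d:ℝ) := by exact_mod_cast hd
  have hXpos : 0 ≤ X := div_nonneg ha2 ha.le
  have h1 : (d:ℝ) * Y ≤ ((d:ℝ)-4)*X := by
    have := mul_le_mul_of_nonneg_left hcurv hdpos.le
    have e : (d:ℝ) * ((1 - 4/(d:ℝ))*X) = ((d:ℝ)-4)*X := by
      field_simp
    linarith [this, e.le, e.ge]
  have hq : 0 ≤ ((d:ℝ)+2)*((d:ℝ)+1)*x^2 - 2*(d:ℝ)*((d:ℝ)+2)*x*y + (d:ℝ)*((d:ℝ)+1)*y^2 := by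
    nlinarith [mul_nonneg (by positivity : (0:ℝ) ≤ (d:ℝ)+2) (sq_nonneg (((d:ℝ)+1)*x - (d:ℝ)*y)),
      mul_nonneg hdpos.le (sq_nonneg y), hdpos]
  have hS : 6 * X ≤ ((d:ℝ)+2)*X + ((d:ℝ)+2)*((d:ℝ)+1)*x^2
      - 2*(d:ℝ)*((d:ℝ)+2)*x*y + (d:ℝ)*((d:ℝ)+1)*y^2 - (d:ℝ)*Y := by linarith
  calc 6 * (c * a^(d+2)/b^d) * X = (c * a^(d+2)/b^d) * (6*X) := by ring
    _ ≤ _ := mul_le_mul_of_nonneg_left hS hC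

theorem statement_19 (d : ℕ) (hd : 1 ≤ d) (cstar : ℝ) (hcstar : 0 ≤ cstar)
    (I : Set ℝ) (hIopen : IsOpen I) (hIconv : Convex ℝ I)
    (ρ γ : ℝ → ℝ)
    (hρpos : ∀ t ∈ I, 0 < ρ t) (hγpos : ∀ t ∈ I, 0 < γ t)
    (hρdiff : ∀ t ∈ I, DifferentiableAt ℝ ρ t ∧ DifferentiableAt ℝ (deriv ρ) t)
    (hγdiff : ∀ t ∈ I, DifferentiableAt ℝ γ t ∧ DifferentiableAt ℝ (deriv γ) t)
    (hγ'' : ∀ t ∈ I, 0 ≤ deriv (deriv γ) t)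
    (hcurv : ∀ t ∈ I,
      deriv (deriv ρ) t / ρ t ≤ (1 - 4 / (d : ℝ)) * (deriv (deriv γ) t / γ t)) :
    (∀ t ∈ I,
      6 * (cstar * γ t ^ (d + 2) / ρ t ^ d) * (deriv (deriv γ) t / γ t) ≤
        deriv (deriv (fun u => cstar * γ u ^ (d + 2) / ρ u ^ d)) t ∧
      0 ≤ 6 * (cstar * γ t ^ (d + 2) / ρ t ^ d) * (deriv (deriv γ) t / γ t)) ∧
    ConvexOn ℝ I (fun u => cstar * γ u ^ (d + 2) / ρ u ^ d) := by
  have hA : ∀ t ∈ I, HasDerivAt (fun u => cstar * γ u ^ (d + 2) / ρ u ^ d)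
      (cstar * ((d:ℝ)+2) * γ t ^ (d+1) * deriv γ t / ρ t ^ d -
        cstar * (d:ℝ) * γ t ^ (d+2) * deriv ρ t / ρ t ^ (d+1)) t := by
    intro t ht
    have hγt := (hγdiff t ht).1.hasDerivAt
    have hρt := (hρdiff t ht).1.hasDerivAt
    have hbne : ρ t ≠ 0 := (hρpos t ht).ne'
    have h1 : HasDerivAt (fun u => cstar * γ u ^ (d+2))
        (cstar * ((↑(d+2):ℝ) * γ t ^ (d+1) * deriv γ t)) t :=
      (hγt.pow (d+2)).const_mul cstar
    have h2 : HasDerivAt (fun u => ρ u ^ d) ((d:ℝ) * ρ t ^ (d-1) * deriv ρ t) t := hρt.pow d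
    have h3 := h1.div h2 (pow_ne_zero d hbne)
    refine h3.congr_deriv ?_
    rw [pow_deriv_aux d (ρ t) (deriv ρ t) hbne]
    exact (derivF_eq d cstar (γ t) (deriv γ t) (ρ t) (deriv ρ t) hbne).symm
  have hB : ∀ t ∈ I, HasDerivAt (fun u =>
        cstar * ((d:ℝ)+2) * γ u ^ (d+1) * deriv γ u / ρ u ^ d -
        cstar * (d:ℝ) * γ u ^ (d+2) * deriv ρ u / ρ u ^ (d+1))
      (cstar * γ t ^ (d + 2) / ρ t ^ d *
        (((d:ℝ)+2)*(deriv (deriv γ) t / γ t)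
          + ((d:ℝ)+2)*((d:ℝ)+1)*(deriv γ t / γ t)^2
          - 2*(d:ℝ)*((d:ℝ)+2)*(deriv γ t / γ t)*(deriv ρ t / ρ t)
          + (d:ℝ)*((d:ℝ)+1)*(deriv ρ t / ρ t)^2
          - (d:ℝ)*(deriv (deriv ρ) t / ρ t))) t := by
    intro t ht
    have hγt := (hγdiff t ht).1.hasDerivAt
    have hρt := (hρdiff t ht).1.hasDerivAt
    have hγ't := (hγdiff t ht).2.hasDerivAt
    have hρ't := (hρdiff t ht).2.hasDerivAt
    have hbne : ρ t ≠ 0 := (hρpos t ht).ne'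
    have hane : γ t ≠ 0 := (hγpos t ht).ne'
    have h4 : ρ t ^ d ≠ 0 := pow_ne_zero _ hbne
    have h5 : ρ t ^ (d+1) ≠ 0 := pow_ne_zero _ hbne
    have hn1 : HasDerivAt (fun u => cstar * ((d:ℝ)+2) * γ u ^ (d+1) * deriv γ u)
        ((cstar * ((d:ℝ)+2) * ((↑(d+1):ℝ) * γ t ^ d * deriv γ t)) * deriv γ t +
          cstar * ((d:ℝ)+2) * γ t ^ (d+1) * deriv (deriv γ) t) t :=
      (((hγt.pow (d+1)).const_mul (cstar * ((d:ℝ)+2))).mul hγ't)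
    have hn2 : HasDerivAt (fun u => cstar * (d:ℝ) * γ u ^ (d+2) * deriv ρ u)
        ((cstar * (d:ℝ) * ((↑(d+2):ℝ) * γ t ^ (d+1) * deriv γ t)) * deriv ρ t +
          cstar * (d:ℝ) * γ t ^ (d+2) * deriv (deriv ρ) t) t :=
      (((hγt.pow (d+2)).const_mul (cstar * (d:ℝ))).mul hρ't)
    have h2 : HasDerivAt (fun u => ρ u ^ d) ((d:ℝ) * ρ t ^ (d-1) * deriv ρ t) t := hρt.pow d
    have h2' : HasDerivAt (fun u => ρ u ^ (d+1)) ((↑(d+1):ℝ) * ρ t ^ d * deriv ρ t) t :=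
      hρt.pow (d+1)
    have h6 := (hn1.div h2 h4).sub (hn2.div h2' h5)
    refine h6.congr_deriv ?_
    rw [pow_deriv_aux d (ρ t) (deriv ρ t) hbne]
    exact (derivG_eq d cstar (γ t) (deriv γ t) (deriv (deriv γ) t) (ρ t) (deriv ρ t)
      (deriv (deriv ρ) t) hane hbne)
  have hd2 : ∀ t ∈ I, deriv (deriv (fun u => cstar * γ u ^ (d + 2) / ρ u ^ d)) t =
      cstar * γ t ^ (d + 2) / ρ t ^ d *
        (((d:ℝ)+2)*(deriv (deriv γ) t / γ t)
          + ((d:ℝ)+2)*((d:ℝ)+1)*(deriv γ t / γ t)^2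
          - 2*(d:ℝ)*((d:ℝ)+2)*(deriv γ t / γ t)*(deriv ρ t / ρ t)
          + (d:ℝ)*((d:ℝ)+1)*(deriv ρ t / ρ t)^2
          - (d:ℝ)*(deriv (deriv ρ) t / ρ t)) := by
    intro t ht
    have hev : deriv (fun u => cstar * γ u ^ (d + 2) / ρ u ^ d) =ᶠ[nhds t]
        (fun u => cstar * ((d:ℝ)+2) * γ u ^ (d+1) * deriv γ u / ρ u ^ d -
          cstar * (d:ℝ) * γ u ^ (d+2) * deriv ρ u / ρ u ^ (d+1)) :=
      Filter.eventuallyEq_of_mem (hIopen.mem_nhds ht) (fun u hu => (hA u hu).deriv)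
    rw [hev.deriv_eq, (hB t ht).deriv]
  have hmain : ∀ t ∈ I,
      6 * (cstar * γ t ^ (d + 2) / ρ t ^ d) * (deriv (deriv γ) t / γ t) ≤
        deriv (deriv (fun u => cstar * γ u ^ (d + 2) / ρ u ^ d)) t := by
    intro t ht
    rw [hd2 t ht]
    exact key_ineq d hd cstar (γ t) (deriv γ t) (deriv (deriv γ) t) (ρ t) (deriv ρ t)
      (deriv (deriv ρ) t) hcstar (hγpos t ht) (hρpos t ht) (hγ'' t ht) (hcurv t ht)
  have hnn : ∀ t ∈ I, 0 ≤ 6 * (cstar * γ t ^ (d + 2) / ρ t ^ d) * (deriv (deriv γ) t / γ t) := by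
    intro t ht
    have h1 : 0 ≤ cstar * γ t ^ (d + 2) / ρ t ^ d := by
      have := hγpos t ht; have := hρpos t ht; positivity
    have h2 : 0 ≤ deriv (deriv γ) t / γ t := div_nonneg (hγ'' t ht) (hγpos t ht).le
    positivity
  refine ⟨fun t ht => ⟨hmain t ht, hnn t ht⟩, ?_⟩
  apply convexOn_of_deriv2_nonneg hIconv
  · intro t ht
    exact ((hA t ht).differentiableAt).continuousAt.continuousWithinAt
  · intro t ht
    rw [hIopen.interior_eq] at ht
    exact ((hA t ht).differentiableAt).differentiableWithinAt
  · intro t ht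
    rw [hIopen.interior_eq] at ht
    have hev : deriv (fun u => cstar * γ u ^ (d + 2) / ρ u ^ d) =ᶠ[nhds t]
        (fun u => cstar * ((d:ℝ)+2) * γ u ^ (d+1) * deriv γ u / ρ u ^ d -
          cstar * (d:ℝ) * γ u ^ (d+2) * deriv ρ u / ρ u ^ (d+1)) :=
      Filter.eventuallyEq_of_mem (hIopen.mem_nhds ht) (fun u hu => (hA u hu).deriv)
    exact (((hB t ht).differentiableAt).congr_of_eventuallyEq hev).differentiableWithinAt
  · intro t ht
    rw [hIopen.interior_eq] at ht
    have : deriv^[2] (fun u => cstar * γ u ^ (d + 2) / ρ u ^ d) t =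
        deriv (deriv (fun u => cstar * γ u ^ (d + 2) / ρ u ^ d)) t := by
      simp [Function.iterate_succ_apply']
    rw [this]
    exact le_trans (hnn t ht) (hmain t ht)
end
end
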